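/- arXiv:2305.03106 — 2 statements merged into one kernel-verified Lean document; each statement's English description precedes it below -/
import Mathlib

section
/- Let N be a binary phylogenetic network. The minimum number of leaf additions needed to make N tree-child equals the number of omnians of N. -/
namespace PhyloNet

/-- A binary phylogenetic network, encoded on vertex set `verts ⊆ ℕ`. -/
structure Network where
  verts : Finset ℕ
  arc : ℕ → ℕ → Bool
  root : ℕ
  root_mem : root ∈ verts
  arc_mem : ∀ u v : ℕ, arc u v = true → u ∈ verts ∧ v ∈ verts
  acyclic : ∀ v : ℕ, ¬ Relation.TransGen (fun a b : ℕ => arc a b = true) v v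
  root_indeg : (verts.filter fun u => arc u root = true).card = 0
  root_outdeg : (verts.filter fun w => arc root w = true).card = 1
  nonroot_deg : ∀ v ∈ verts, v ≠ root →
    ((verts.filter fun u => arc u v = true).card = 1 ∧
      (verts.filter fun w => arc v w = true).card = 2) ∨
    ((verts.filter fun u => arc u v = true).card = 2 ∧
      (verts.filter fun w => arc v w = true).card = 1) ∨
    ((verts.filter fun u => arc u v = true).card = 1 ∧
      (verts.filter fun w => arc v w = true).card = 0)

def inDeg (N : Network) (v : ℕ) : ℕ := (N.verts.filter fun u => N.arc u v = true).card

def outDeg (N : Network) (v : ℕ) : ℕ := (N.verts.filter fun w => N.arc v w = true).card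

def IsLeaf (N : Network) (v : ℕ) : Prop := v ∈ N.verts ∧ inDeg N v = 1 ∧ outDeg N v = 0

def IsRet (N : Network) (v : ℕ) : Prop := v ∈ N.verts ∧ inDeg N v = 2

def IsTreeVert (N : Network) (v : ℕ) : Prop := v ∈ N.verts ∧ inDeg N v = 1 ∧ outDeg N v = 2

def IsInternal (N : Network) (v : ℕ) : Prop := v ∈ N.verts ∧ v ≠ N.root ∧ ¬ IsLeaf N v

def IsTree (N : Network) : Prop := ∀ v : ℕ, ¬ IsRet N v

noncomputable def retCount (N : Network) : ℕ := {v : ℕ | IsRet N v}.ncard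

/-- Tree-child: every non-leaf vertex has a child that is a tree vertex or a leaf. -/
def IsTreeChild (N : Network) : Prop :=
  ∀ v ∈ N.verts, ¬ IsLeaf N v → ∃ w : ℕ, N.arc v w = true ∧ (IsTreeVert N w ∨ IsLeaf N w)

/-- An omnian: an internal vertex all of whose children are reticulations. -/
def IsOmnian (N : Network) (v : ℕ) : Prop :=
  IsInternal N v ∧ ∀ w : ℕ, N.arc v w = true → IsRet N w

noncomputable def omnianCount (N : Network) : ℕ := {v : ℕ | IsOmnian N v}.ncard

/-- `N'` is obtained from `N` by adding a leaf to the arc `uv`: the arc is subdivided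
by a fresh vertex `w`, and a fresh leaf `x` is attached to `w`. -/
def IsLeafAdditionOn (N N' : Network) (u v : ℕ) : Prop :=
  N.arc u v = true ∧ ∃ w x : ℕ, w ∉ N.verts ∧ x ∉ N.verts ∧ w ≠ x ∧
    N'.verts = insert w (insert x N.verts) ∧ N'.root = N.root ∧
    ∀ a b : ℕ, (N'.arc a b = true ↔
      ((N.arc a b = true ∧ ¬ (a = u ∧ b = v)) ∨ (a = u ∧ b = w) ∨
        (a = w ∧ b = v) ∨ (a = w ∧ b = x)))

def IsLeafAddition (N N' : Network) : Prop := ∃ u v : ℕ, IsLeafAdditionOn N N' u v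

/-- `N'` is obtained from `N` by adding a leaf to a reticulation arc. -/
def IsRetArcLeafAddition (N N' : Network) : Prop :=
  ∃ u v : ℕ, IsRet N v ∧ IsLeafAdditionOn N N' u v

/-- `P` holds after exactly `k` steps of relation `step` starting from `N`. -/
def ReachableBy (step : Network → Network → Prop) (N : Network) (k : ℕ)
    (P : Network → Prop) : Prop :=
  ∃ M : ℕ → Network, M 0 = N ∧ (∀ i : ℕ, i < k → step (M i) (M (i + 1))) ∧ P (M k)

/-- The minimum number of leaf additions needed to bring `N` into the class `P`. -/
noncomputable def leafAddDist (P : Network → Prop) (N : Network) : ℕ :=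
  sInf {k : ℕ | ReachableBy IsLeafAddition N k P}

noncomputable def LTC (N : Network) : ℕ := leafAddDist IsTreeChild N

/-- Reduction of a cherry (x,y): delete the leaf x and suppress its parent p
(whose own parent is q, gaining the arc q → y). -/
def ReducesCherry (N N' : Network) (x y : ℕ) : Prop :=
  ∃ p q : ℕ, IsLeaf N x ∧ IsLeaf N y ∧ x ≠ y ∧
    N.arc p x = true ∧ N.arc p y = true ∧ N.arc q p = true ∧
    N'.verts = (N.verts.erase x).erase p ∧ N'.root = N.root ∧
    ∀ a b : ℕ, (N'.arc a b = true ↔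
      (N.arc a b = true ∧ a ≠ p ∧ b ≠ p ∧ b ≠ x) ∨ (a = q ∧ b = y))

/-- Reduction of a reticulated cherry (x,y): delete the arc from the parent p_y of y
to the reticulation parent p_x of x, and clean up (suppressing p_x and p_y). -/
def ReducesRetCherry (N N' : Network) (x y : ℕ) : Prop :=
  ∃ px py z q : ℕ, IsLeaf N x ∧ IsLeaf N y ∧ IsRet N px ∧
    N.arc px x = true ∧ N.arc py px = true ∧ N.arc py y = true ∧
    N.arc z px = true ∧ z ≠ py ∧ N.arc q py = true ∧
    N'.verts = (N.verts.erase px).erase py ∧ N'.root = N.root ∧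
    ∀ a b : ℕ, (N'.arc a b = true ↔
      (N.arc a b = true ∧ a ≠ px ∧ a ≠ py ∧ b ≠ px ∧ b ≠ py) ∨
        (a = z ∧ b = x) ∨ (a = q ∧ b = y))

def CherryStep (N N' : Network) : Prop :=
  ∃ x y : ℕ, ReducesCherry N N' x y ∨ ReducesRetCherry N N' x y

/-- A network consisting of the root and a single leaf. -/
def IsSingleLeaf (N : Network) : Prop := ∃ x : ℕ, x ≠ N.root ∧ N.verts = {N.root, x}

/-- Orchard: reducible to a single leaf by cherry and reticulated cherry reductions. -/
def IsOrchard (N : Network) : Prop :=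
  ∃ N' : Network, Relation.ReflTransGen CherryStep N N' ∧ IsSingleLeaf N'

noncomputable def LOR (N : Network) : ℕ := leafAddDist IsOrchard N

/-- Tree-based: there is a spanning tree (a choice of one incoming arc for each
non-root vertex) all of whose leaves are leaves of `N`. -/
def IsTreeBased (N : Network) : Prop :=
  ∃ T : ℕ → ℕ → Bool, (∀ u v : ℕ, T u v = true → N.arc u v = true) ∧
    (∀ v ∈ N.verts, v ≠ N.root → (N.verts.filter fun u => T u v = true).card = 1) ∧
    (∀ v ∈ N.verts, ¬ IsLeaf N v → ∃ w : ℕ, T v w = true)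

noncomputable def LTB (N : Network) : ℕ := leafAddDist IsTreeBased N

/-- A zig-zag trail: a nonempty duplicate-free sequence of arcs in which
consecutive arcs share a tail or share a head. -/
def IsZigZag (N : Network) (s : List (ℕ × ℕ)) : Prop :=
  s ≠ [] ∧ s.Nodup ∧ (∀ a ∈ s, N.arc a.1 a.2 = true) ∧
    List.Chain' (fun a b : ℕ × ℕ => a.1 = b.1 ∨ a.2 = b.2) s

def IsMaximalZigZag (N : Network) (s : List (ℕ × ℕ)) : Prop :=
  IsZigZag N s ∧ ∀ t : List (ℕ × ℕ), IsZigZag N t → s.Sublist t → t.length = s.length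

/-- A W-fence: a maximal zig-zag trail of even length whose two end-arc tails
are both reticulations. -/
def IsWFence (N : Network) (s : List (ℕ × ℕ)) : Prop :=
  IsMaximalZigZag N s ∧ s.length % 2 = 0 ∧ 2 ≤ s.length ∧
    IsRet N (s.headD (0, 0)).1 ∧ IsRet N (s.getLastD (0, 0)).1

/-- An N-fence: a maximal zig-zag trail of odd length exactly one of whose
end-arc tails is a reticulation. -/
def IsNFence (N : Network) (s : List (ℕ × ℕ)) : Prop :=
  IsMaximalZigZag N s ∧ s.length % 2 = 1 ∧
    Xor' (IsRet N (s.headD (0, 0)).1) (IsRet N (s.getLastD (0, 0)).1)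

/-- A zig-zag decomposition: a set of maximal zig-zag trails partitioning the
non-root arcs of the network. -/
def IsZigZagDecomposition (N : Network) (D : Set (List (ℕ × ℕ))) : Prop :=
  (∀ s ∈ D, IsMaximalZigZag N s) ∧
  (∀ s ∈ D, ∀ p ∈ s, p.1 ≠ N.root) ∧
  (∀ a b : ℕ, N.arc a b = true → a ≠ N.root → ∃! s : List (ℕ × ℕ), s ∈ D ∧ (a, b) ∈ s)

/-- A cherry shape: two arcs with a common tail. -/
def IsCherryShape (N : Network) (s : Set (ℕ × ℕ)) : Prop :=
  ∃ p x y : ℕ, x ≠ y ∧ N.arc p x = true ∧ N.arc p y = true ∧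
    s = {(p, x), (p, y)}

/-- A reticulated cherry shape: arcs p_x x, p_y p_x, p_y y where p_x is a reticulation;
its middle arc is p_y p_x. -/
def IsRetCherryShape (N : Network) (s : Set (ℕ × ℕ)) : Prop :=
  ∃ x y px py : ℕ, IsRet N px ∧ N.arc px x = true ∧ N.arc py px = true ∧
    N.arc py y = true ∧ y ≠ px ∧ s = {(px, x), (py, px), (py, y)}

/-- `s` is a reticulated cherry shape with middle arc `(u, r)`. -/
def IsMiddleArcOf (N : Network) (s : Set (ℕ × ℕ)) (u r : ℕ) : Prop :=
  ∃ x y : ℕ, IsRet N r ∧ N.arc r x = true ∧ N.arc u r = true ∧ N.arc u y = true ∧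
    y ≠ r ∧ s = {(r, x), (u, r), (u, y)}

/-- A cherry cover: cherry shapes and reticulated cherry shapes covering every
non-root arc exactly once. -/
def IsCherryCover (N : Network) (P : Set (Set (ℕ × ℕ))) : Prop :=
  (∀ s ∈ P, IsCherryShape N s ∨ IsRetCherryShape N s) ∧
  (∀ a b : ℕ, N.arc a b = true → a ≠ N.root →
    ∃! s : Set (ℕ × ℕ), s ∈ P ∧ (a, b) ∈ s)

/-- The internal vertices of a shape are the tails of its arcs. -/
def shapeInternals (s : Set (ℕ × ℕ)) : Set ℕ := {p : ℕ | ∃ x : ℕ, (p, x) ∈ s}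

/-- The endpoints of a shape: heads of its arcs that are not tails of its arcs. -/
def shapeEndpoints (s : Set (ℕ × ℕ)) : Set ℕ :=
  {x : ℕ | (∃ p : ℕ, (p, x) ∈ s) ∧ ∀ y : ℕ, (x, y) ∉ s}

/-- In the auxiliary graph, shape `B` is directly above shape `C` if an internal
vertex of `C` is an endpoint of `B`. -/
def DirectlyAbove (B C : Set (ℕ × ℕ)) : Prop :=
  ∃ v : ℕ, v ∈ shapeEndpoints B ∧ v ∈ shapeInternals C

/-- The auxiliary graph of the cherry cover `P` contains a directed cycle. -/
def HasCyclicAux (P : Set (Set (ℕ × ℕ))) : Prop :=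
  ∃ s ∈ P, Relation.TransGen
    (fun B C : Set (ℕ × ℕ) => B ∈ P ∧ C ∈ P ∧ DirectlyAbove B C) s s

/-- A non-temporal labelling of `N`. -/
def IsNonTemporal (N : Network) (t : ℕ → ℝ) : Prop :=
  (∀ u v : ℕ, N.arc u v = true → t u ≤ t v) ∧
  (∀ u v : ℕ, N.arc u v = true → t u = t v → IsRet N v) ∧
  (∀ u : ℕ, IsInternal N u → ∃ v : ℕ, N.arc u v = true ∧ t u < t v) ∧
  (∀ r u v : ℕ, IsRet N r → N.arc u r = true → N.arc v r = true → u ≠ v →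
    ¬ (t u = t r ∧ t v = t r))

/-- An inret: a reticulation with no incoming horizontal arc
(i.e. both incoming arcs vertical). -/
def Inret (N : Network) (t : ℕ → ℝ) (r : ℕ) : Prop :=
  IsRet N r ∧ ∀ u : ℕ, N.arc u r = true → t u ≠ t r

noncomputable def inretCount (N : Network) (t : ℕ → ℝ) : ℕ := {r : ℕ | Inret N t r}.ncard

/-- HGT-consistent labelling: a non-temporal labelling in which every reticulation
has exactly one incoming horizontal arc. -/
def IsHGTConsistent (N : Network) (t : ℕ → ℝ) : Prop :=
  IsNonTemporal N t ∧ ∀ r : ℕ, IsRet N r → ∃! u : ℕ, N.arc u r = true ∧ t u = t r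

/-- V_OR: the minimum number of inrets over all non-temporal labellings. -/
noncomputable def VOR (N : Network) : ℕ :=
  sInf {k : ℕ | ∃ t : ℕ → ℝ, IsNonTemporal N t ∧ inretCount N t = k}

/-- The network `N` is the result of the vertex-cover reduction applied to `G`. -/
def IsVCReduction {α : Type} [Fintype α] [DecidableEq α] (G : SimpleGraph α)
    (N : Network) : Prop :=
  ∃ (R W L M : α → ℕ → ℕ) (P : α → ℕ) (S : ℕ → ℕ) (rho : ℕ)
    (e : ℕ → α) (pi tau : α → α → ℕ),
    (∀ v : α, ∃! i : ℕ, 1 ≤ i ∧ i ≤ Fintype.card α ∧ e i = v) ∧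
    (∀ v u : α, G.Adj v u → pi v u ∈ ({1, 2, 3} : Set ℕ)) ∧
    (∀ v u u' : α, G.Adj v u → G.Adj v u' → pi v u = pi v u' → u = u') ∧
    (∀ v u : α, G.Adj v u → tau v u ∈ ({5, 6, 7} : Set ℕ)) ∧
    (∀ v u u' : α, G.Adj v u → G.Adj v u' → tau v u = tau v u' → u = u') ∧
    Function.Injective
      (fun z : (α × Fin 8) ⊕ (α × Fin 7) ⊕ (α × Fin 5) ⊕ (α × Fin 4) ⊕ α ⊕
          (Fin (Fintype.card α - 1)) ⊕ Unit =>
        match z with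
        | Sum.inl (v, i) => R v i.1
        | Sum.inr (Sum.inl (v, i)) => W v (i.1 + 1)
        | Sum.inr (Sum.inr (Sum.inl (v, i))) => L v (i.1 + 1)
        | Sum.inr (Sum.inr (Sum.inr (Sum.inl (v, i)))) => M v (i.1 + 1)
        | Sum.inr (Sum.inr (Sum.inr (Sum.inr (Sum.inl v)))) => P v
        | Sum.inr (Sum.inr (Sum.inr (Sum.inr (Sum.inr (Sum.inl i))))) => S (i.1 + 1)
        | Sum.inr (Sum.inr (Sum.inr (Sum.inr (Sum.inr (Sum.inr _))))) => rho) ∧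
    N.root = rho ∧
    (∀ x : ℕ, x ∈ N.verts ↔
      (∃ v i, i ≤ 7 ∧ x = R v i) ∨ (∃ v i, 1 ≤ i ∧ i ≤ 7 ∧ x = W v i) ∨
      (∃ v i, 1 ≤ i ∧ i ≤ 5 ∧ x = L v i) ∨ (∃ v i, 1 ≤ i ∧ i ≤ 4 ∧ x = M v i) ∨
      (∃ v, x = P v) ∨ (∃ i, 1 ≤ i ∧ i ≤ Fintype.card α - 1 ∧ x = S i) ∨ x = rho) ∧
    (∀ a b : ℕ, N.arc a b = true ↔
      (a = rho ∧ b = S 1) ∨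
      (∃ i, 1 ≤ i ∧ i ≤ Fintype.card α - 2 ∧ a = S i ∧ b = S (i + 1)) ∨
      (∃ i, 1 ≤ i ∧ i ≤ Fintype.card α - 1 ∧ a = S i ∧ b = P (e i)) ∨
      (a = S (Fintype.card α - 1) ∧ b = P (e (Fintype.card α))) ∨
      (∃ v, a = P v ∧ (b = M v 4 ∨ b = W v 7)) ∨
      (∃ v, a = M v 4 ∧ (b = M v 3 ∨ b = R v 0)) ∨
      (∃ v, a = M v 3 ∧ (b = M v 2 ∨ b = W v 6)) ∨
      (∃ v, a = M v 2 ∧ (b = M v 1 ∨ b = W v 5)) ∨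
      (∃ v, a = M v 1 ∧ (b = R v 0 ∨ b = W v 4)) ∨
      (∃ v, a = R v 0 ∧ b = R v 1) ∨
      (∃ v i, 1 ≤ i ∧ i ≤ 6 ∧ a = W v i ∧ (b = R v i ∨ b = R v (i + 1))) ∨
      (∃ v, a = W v 7 ∧ (b = R v 7 ∨ b = L v 5)) ∨
      (∃ v i, 1 ≤ i ∧ i ≤ 4 ∧ a = R v i ∧ b = L v i) ∨
      (∃ u v, G.Adj u v ∧ a = R u (tau u v) ∧ b = W v (pi v u)))


/-! ### Auxiliary development -/

section Basics

/-- Data describing a leaf addition on the arc `u → v`, with new vertex set `V'`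
and new arc function `A'`. -/
structure AddData (N : Network) (u v w x : ℕ) (V' : Finset ℕ) (A' : ℕ → ℕ → Bool) : Prop where
  huv : N.arc u v = true
  hwm : w ∉ N.verts
  hxm : x ∉ N.verts
  hwx : w ≠ x
  hV : V' = insert w (insert x N.verts)
  hA : ∀ a b : ℕ, (A' a b = true ↔
      ((N.arc a b = true ∧ ¬ (a = u ∧ b = v)) ∨ (a = u ∧ b = w) ∨
        (a = w ∧ b = v) ∨ (a = w ∧ b = x)))

namespace AddData

variable {N : Network} {u v w x : ℕ} {V' : Finset ℕ} {A' : ℕ → ℕ → Bool}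
  (D : AddData N u v w x V' A')

include D

lemma hu : u ∈ N.verts := (N.arc_mem u v D.huv).1
lemma hv : v ∈ N.verts := (N.arc_mem u v D.huv).2
lemma wu : w ≠ u := fun h => D.hwm (h ▸ D.hu)
lemma wv : w ≠ v := fun h => D.hwm (h ▸ D.hv)
lemma xu : x ≠ u := fun h => D.hxm (h ▸ D.hu)
lemma xv : x ≠ v := fun h => D.hxm (h ▸ D.hv)

lemma inFilter {b : ℕ} (hb : b ∈ N.verts) (hbv : b ≠ v) :
    V'.filter (fun a => A' a b = true) = N.verts.filter (fun a => N.arc a b = true) := by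
  ext a
  simp only [Finset.mem_filter, D.hV, Finset.mem_insert]
  rw [D.hA]
  constructor
  · rintro ⟨_, h | h | h | h⟩
    · exact ⟨(N.arc_mem _ _ h.1).1, h.1⟩
    · exact absurd hb (h.2 ▸ D.hwm)
    · exact absurd h.2 hbv
    · exact absurd hb (h.2 ▸ D.hxm)
  · rintro ⟨ha, h⟩
    exact ⟨Or.inr (Or.inr ha), Or.inl ⟨h, fun hc => hbv hc.2⟩⟩

lemma inFilter_v : V'.filter (fun a => A' a v = true)
    = insert w ((N.verts.filter (fun a => N.arc a v = true)).erase u) := by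
  ext a
  simp only [Finset.mem_filter, D.hV, Finset.mem_insert, Finset.mem_erase]
  rw [D.hA]
  constructor
  · rintro ⟨_, h | h | h | h⟩
    · exact Or.inr ⟨fun hc => h.2 ⟨hc, rfl⟩, (N.arc_mem _ _ h.1).1, h.1⟩
    · exact absurd h.2.symm D.wv
    · exact Or.inl h.1
    · exact absurd h.2.symm D.xv
  · rintro (rfl | ⟨hau, hav, harc⟩)
    · exact ⟨Or.inl rfl, Or.inr (Or.inr (Or.inl ⟨rfl, rfl⟩))⟩
    · exact ⟨Or.inr (Or.inr hav), Or.inl ⟨harc, fun hc => hau hc.1⟩⟩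

lemma inCard_v : (V'.filter (fun a => A' a v = true)).card
    = (N.verts.filter (fun a => N.arc a v = true)).card := by
  have hu' : u ∈ N.verts.filter (fun a => N.arc a v = true) :=
    Finset.mem_filter.mpr ⟨D.hu, D.huv⟩
  have hw' : w ∉ (N.verts.filter (fun a => N.arc a v = true)).erase u :=
    fun h => D.hwm (Finset.mem_filter.mp (Finset.mem_of_mem_erase h)).1
  rw [D.inFilter_v, Finset.card_insert_of_notMem hw', Finset.card_erase_of_mem hu']
  have : 0 < (N.verts.filter (fun a => N.arc a v = true)).card := Finset.card_pos.mpr ⟨u, hu'⟩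
  omega

lemma inCard {b : ℕ} (hb : b ∈ N.verts) :
    (V'.filter (fun a => A' a b = true)).card
      = (N.verts.filter (fun a => N.arc a b = true)).card := by
  by_cases hbv : b = v
  · subst hbv; exact D.inCard_v
  · rw [D.inFilter hb hbv]

lemma inFilter_w : V'.filter (fun a => A' a w = true) = {u} := by
  ext a
  simp only [Finset.mem_filter, D.hV, Finset.mem_insert, Finset.mem_singleton]
  rw [D.hA]
  constructor
  · rintro ⟨_, h | h | h | h⟩
    · exact absurd (N.arc_mem _ _ h.1).2 D.hwm
    · exact h.1
    · exact absurd h.2 D.wv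
    · exact absurd h.2 D.hwx
  · rintro rfl
    exact ⟨Or.inr (Or.inr D.hu), Or.inr (Or.inl ⟨rfl, rfl⟩)⟩

lemma inFilter_x : V'.filter (fun a => A' a x = true) = {w} := by
  ext a
  simp only [Finset.mem_filter, D.hV, Finset.mem_insert, Finset.mem_singleton]
  rw [D.hA]
  constructor
  · rintro ⟨_, h | h | h | h⟩
    · exact absurd (N.arc_mem _ _ h.1).2 D.hxm
    · exact absurd h.2.symm D.hwx
    · exact absurd h.2 D.xv
    · exact h.1
  · rintro rfl
    exact ⟨Or.inl rfl, Or.inr (Or.inr (Or.inr ⟨rfl, rfl⟩))⟩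

lemma outFilter {a : ℕ} (ha : a ∈ N.verts) (hau : a ≠ u) :
    V'.filter (fun b => A' a b = true) = N.verts.filter (fun b => N.arc a b = true) := by
  ext b
  simp only [Finset.mem_filter, D.hV, Finset.mem_insert]
  rw [D.hA]
  constructor
  · rintro ⟨_, h | h | h | h⟩
    · exact ⟨(N.arc_mem _ _ h.1).2, h.1⟩
    · exact absurd h.1 hau
    · exact absurd ha (h.1 ▸ D.hwm)
    · exact absurd ha (h.1 ▸ D.hwm)
  · rintro ⟨hb, h⟩
    exact ⟨Or.inr (Or.inr hb), Or.inl ⟨h, fun hc => hau hc.1⟩⟩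

lemma outFilter_u : V'.filter (fun b => A' u b = true)
    = insert w ((N.verts.filter (fun b => N.arc u b = true)).erase v) := by
  ext b
  simp only [Finset.mem_filter, D.hV, Finset.mem_insert, Finset.mem_erase]
  rw [D.hA]
  constructor
  · rintro ⟨_, h | h | h | h⟩
    · exact Or.inr ⟨fun hc => h.2 ⟨rfl, hc⟩, (N.arc_mem _ _ h.1).2, h.1⟩
    · exact Or.inl h.2
    · exact absurd h.1.symm D.wu
    · exact absurd h.1.symm D.wu
  · rintro (rfl | ⟨hbv, hbm, harc⟩)
    · exact ⟨Or.inl rfl, Or.inr (Or.inl ⟨rfl, rfl⟩)⟩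
    · exact ⟨Or.inr (Or.inr hbm), Or.inl ⟨harc, fun hc => hbv hc.2⟩⟩

lemma outCard_u : (V'.filter (fun b => A' u b = true)).card
    = (N.verts.filter (fun b => N.arc u b = true)).card := by
  have hv' : v ∈ N.verts.filter (fun b => N.arc u b = true) :=
    Finset.mem_filter.mpr ⟨D.hv, D.huv⟩
  have hw' : w ∉ (N.verts.filter (fun b => N.arc u b = true)).erase v :=
    fun h => D.hwm (Finset.mem_filter.mp (Finset.mem_of_mem_erase h)).1
  rw [D.outFilter_u, Finset.card_insert_of_notMem hw', Finset.card_erase_of_mem hv']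
  have : 0 < (N.verts.filter (fun b => N.arc u b = true)).card := Finset.card_pos.mpr ⟨v, hv'⟩
  omega

lemma outCard {a : ℕ} (ha : a ∈ N.verts) :
    (V'.filter (fun b => A' a b = true)).card
      = (N.verts.filter (fun b => N.arc a b = true)).card := by
  by_cases hau : a = u
  · subst hau; exact D.outCard_u
  · rw [D.outFilter ha hau]

lemma outFilter_w : V'.filter (fun b => A' w b = true) = insert v {x} := by
  ext b
  simp only [Finset.mem_filter, D.hV, Finset.mem_insert, Finset.mem_singleton]
  rw [D.hA]
  constructor
  · rintro ⟨_, h | h | h | h⟩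
    · exact absurd (N.arc_mem _ _ h.1).1 D.hwm
    · exact absurd h.1 D.wu
    · exact Or.inl h.2
    · exact Or.inr h.2
  · rintro (rfl | rfl)
    · exact ⟨Or.inr (Or.inr D.hv), Or.inr (Or.inr (Or.inl ⟨rfl, rfl⟩))⟩
    · exact ⟨Or.inr (Or.inl rfl), Or.inr (Or.inr (Or.inr ⟨rfl, rfl⟩))⟩

lemma outFilter_x : V'.filter (fun b => A' x b = true) = ∅ := by
  rw [Finset.eq_empty_iff_forall_notMem]
  intro b hb
  obtain ⟨_, h⟩ := Finset.mem_filter.mp hb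
  rcases (D.hA x b).mp h with h | h | h | h
  · exact D.hxm (N.arc_mem _ _ h.1).1
  · exact D.xu h.1
  · exact D.hwx h.1.symm
  · exact D.hwx h.1.symm

end AddData

end Basics
section Acyclic

variable {N : Network} {u v w x : ℕ} {V' : Finset ℕ} {A' : ℕ → ℕ → Bool}

namespace AddData

variable (D : AddData N u v w x V' A')

include D

/-- The subdivided network is acyclic. -/
lemma acyclic' : ∀ z : ℕ, ¬ Relation.TransGen (fun a b : ℕ => A' a b = true) z z := by
  classical
  set r : ℕ → ℕ → Prop := fun a b => N.arc a b = true with hr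
  set g : ℕ → ℕ := fun a => if a = w then v else if a = x then v else a with hg
  have gw : g w = v := by simp [hg]
  have gx : g x = v := by simp [hg, Ne.symm D.hwx]
  have gz : ∀ a : ℕ, a ≠ w → a ≠ x → g a = a := by
    intro a h1 h2; simp [hg, h1, h2]
  have gmem : ∀ a : ℕ, a ∈ N.verts → g a = a := fun a ha =>
    gz a (fun h => D.hwm (h ▸ ha)) (fun h => D.hxm (h ▸ ha))
  have stepA : ∀ a b : ℕ, A' a b = true → Relation.ReflTransGen r (g a) (g b) := by
    intro a b h
    rcases (D.hA a b).mp h with ⟨h1, _⟩ | ⟨rfl, rfl⟩ | ⟨rfl, rfl⟩ | ⟨rfl, rfl⟩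
    · rw [gmem a (N.arc_mem _ _ h1).1, gmem b (N.arc_mem _ _ h1).2]
      exact Relation.ReflTransGen.single h1
    · rw [gmem a D.hu, gw]; exact Relation.ReflTransGen.single D.huv
    · rw [gw, gmem b D.hv]
    · rw [gw, gx]
  have stepB : ∀ a b : ℕ, Relation.TransGen (fun p q => A' p q = true) a b →
      a ≠ w → a ≠ x → Relation.TransGen r (g a) (g b) := by
    intro a b h
    induction h with
    | single h1 =>
      intro haw hax
      rcases (D.hA _ _).mp h1 with ⟨h2, _⟩ | ⟨rfl, rfl⟩ | ⟨rfl, _⟩ | ⟨rfl, _⟩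
      · rw [gmem _ (N.arc_mem _ _ h2).1, gmem _ (N.arc_mem _ _ h2).2]
        exact Relation.TransGen.single h2
      · rw [gmem _ D.hu, gw]; exact Relation.TransGen.single D.huv
      · exact absurd rfl haw
      · exact absurd rfl haw
    | tail h1 h2 ih =>
      intro haw hax
      exact (ih haw hax).trans_left (stepA _ _ h2)
  have no_out_x : ∀ b : ℕ, A' x b = true → False := by
    intro b h
    rcases (D.hA x b).mp h with h | h | h | h
    · exact D.hxm (N.arc_mem _ _ h.1).1
    · exact D.xu h.1
    · exact D.hwx h.1.symm
    · exact D.hwx h.1.symm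
  intro z hz
  by_cases hzw : z = w
  · rw [hzw] at hz
    obtain ⟨c, hwc, hcw⟩ := Relation.TransGen.head'_iff.mp hz
    rcases (D.hA w c).mp hwc with h | h | h | h
    · exact D.hwm (N.arc_mem _ _ h.1).1
    · exact D.wu h.1
    · rw [h.2] at hcw
      rcases hcw.cases_head with heq | ⟨d, hvd, hdw⟩
      · exact D.wv heq.symm
      · have hvw : Relation.TransGen (fun p q : ℕ => A' p q = true) v w :=
          Relation.TransGen.head' hvd hdw
        have := stepB v w hvw (Ne.symm D.wv) (Ne.symm D.xv)
        rw [gmem v D.hv, gw] at this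
        exact N.acyclic v this
    · rw [h.2] at hcw
      rcases hcw.cases_head with heq | ⟨d, hxd, _⟩
      · exact D.hwx heq.symm
      · exact no_out_x d hxd
  · by_cases hzx : z = x
    · subst hzx
      obtain ⟨c, hxc, _⟩ := Relation.TransGen.head'_iff.mp hz
      exact no_out_x c hxc
    · exact N.acyclic (g z) (stepB z z hz hzw hzx)

end AddData

/-- Every vertex is reachable from the root. -/
lemma reach_root (N : Network) : ∀ z ∈ N.verts,
    Relation.ReflTransGen (fun a b : ℕ => N.arc a b = true) N.root z := by
  classical
  have wf : WellFounded (fun a b : {z // z ∈ N.verts} =>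
      Relation.TransGen (fun p q : ℕ => N.arc p q = true) a.1 b.1) := by
    have t : IsTrans {z // z ∈ N.verts}
        (fun a b => Relation.TransGen (fun p q : ℕ => N.arc p q = true) a.1 b.1) :=
      ⟨fun a b c hab hbc => hab.trans hbc⟩
    have i : IsIrrefl {z // z ∈ N.verts}
        (fun a b => Relation.TransGen (fun p q : ℕ => N.arc p q = true) a.1 b.1) :=
      ⟨fun a h => N.acyclic a.1 h⟩
    exact Finite.wellFounded_of_trans_of_irrefl _
  intro z hz
  refine wf.induction
    (C := fun a : {z // z ∈ N.verts} =>
      Relation.ReflTransGen (fun p q : ℕ => N.arc p q = true) N.root a.1) ⟨z, hz⟩ ?_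
  rintro ⟨y, hy⟩ ih
  by_cases hyr : y = N.root
  · subst hyr; exact Relation.ReflTransGen.refl
  · have hpos : 0 < (N.verts.filter fun p => N.arc p y = true).card := by
      rcases N.nonroot_deg y hy hyr with ⟨h1, _⟩ | ⟨h1, _⟩ | ⟨h1, _⟩ <;> omega
    obtain ⟨p, hp⟩ := Finset.card_pos.mp hpos
    obtain ⟨hpv, hpc⟩ := Finset.mem_filter.mp hp
    exact (ih ⟨p, hpv⟩ (Relation.TransGen.single hpc)).tail hpc

/-- The child of the root is not a reticulation. -/
lemma root_child_not_ret (N : Network) {c : ℕ} (h : N.arc N.root c = true) : ¬ IsRet N c := by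
  rintro ⟨hc, hdeg⟩
  have h2 : 1 < (N.verts.filter fun p => N.arc p c = true).card := by
    have : (N.verts.filter fun p => N.arc p c = true).card = 2 := hdeg
    omega
  obtain ⟨a, ha, b, hb, hab⟩ := Finset.one_lt_card.mp h2
  obtain ⟨p, hpmem, hpr⟩ : ∃ p, p ∈ (N.verts.filter fun q => N.arc q c = true) ∧ p ≠ N.root := by
    by_cases hA : a = N.root
    · exact ⟨b, hb, fun hbr => hab (hA.trans hbr.symm)⟩
    · exact ⟨a, ha, hA⟩
  obtain ⟨hpv, hpc⟩ := Finset.mem_filter.mp hpmem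
  rcases (reach_root N p hpv).cases_head with heq | ⟨d, hrd, hdp⟩
  · exact hpr heq.symm
  · obtain ⟨e, he⟩ := Finset.card_eq_one.mp N.root_outdeg
    have hc1 : c ∈ N.verts.filter (fun q => N.arc N.root q = true) :=
      Finset.mem_filter.mpr ⟨hc, h⟩
    have hd1 : d ∈ N.verts.filter (fun q => N.arc N.root q = true) :=
      Finset.mem_filter.mpr ⟨(N.arc_mem _ _ hrd).2, hrd⟩
    rw [he, Finset.mem_singleton] at hc1 hd1
    rw [hd1.trans hc1.symm] at hdp
    exact N.acyclic c (Relation.TransGen.tail' hdp hpc)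

/-- A non-reticulation child is a tree vertex or a leaf. -/
lemma child_type (N : Network) {a c : ℕ} (h : N.arc a c = true) (hret : ¬ IsRet N c) :
    IsTreeVert N c ∨ IsLeaf N c := by
  have hc : c ∈ N.verts := (N.arc_mem _ _ h).2
  have hcr : c ≠ N.root := by
    rintro rfl
    have h0 := N.root_indeg
    rw [Finset.card_eq_zero] at h0
    have : a ∈ N.verts.filter fun p => N.arc p N.root = true :=
      Finset.mem_filter.mpr ⟨(N.arc_mem _ _ h).1, h⟩
    rw [h0] at this
    exact absurd this (Finset.notMem_empty a)
  rcases N.nonroot_deg c hc hcr with ⟨h1, h2⟩ | ⟨h1, h2⟩ | ⟨h1, h2⟩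
  · exact Or.inl ⟨hc, h1, h2⟩
  · exact absurd ⟨hc, h1⟩ hret
  · exact Or.inr ⟨hc, h1, h2⟩

lemma isTreeChild_of_no_omnian (N : Network) (h : ∀ z : ℕ, ¬ IsOmnian N z) :
    IsTreeChild N := by
  intro z hz hnl
  by_cases hzr : z = N.root
  · subst hzr
    obtain ⟨e, he⟩ := Finset.card_eq_one.mp N.root_outdeg
    have hce : e ∈ N.verts.filter (fun q => N.arc N.root q = true) :=
      he ▸ Finset.mem_singleton_self e
    obtain ⟨hev, hae⟩ := Finset.mem_filter.mp hce
    exact ⟨e, hae, child_type N hae (root_child_not_ret N hae)⟩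
  · have h1 : ¬ ∀ c : ℕ, N.arc z c = true → IsRet N c := fun hall => h z ⟨⟨hz, hzr, hnl⟩, hall⟩
    push_neg at h1
    obtain ⟨c, hc, hcr⟩ := h1
    exact ⟨c, hc, child_type N hc hcr⟩

lemma not_omnian_of_treeChild {N : Network} (h : IsTreeChild N) (z : ℕ) : ¬ IsOmnian N z := by
  rintro ⟨⟨hzv, hzr, hnl⟩, hall⟩
  obtain ⟨c, hc, hty⟩ := h z hzv hnl
  have hret := hall c hc
  rcases hty with ⟨_, h1, _⟩ | ⟨_, h1, _⟩ <;> rw [hret.2] at h1 <;> omega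

lemma omnianFinite (N : Network) : {z : ℕ | IsOmnian N z}.Finite :=
  Set.Finite.subset N.verts.finite_toSet (fun z hz => hz.1.1)

lemma omnianCount_eq_zero_of_treeChild {N : Network} (h : IsTreeChild N) :
    omnianCount N = 0 := by
  have : {z : ℕ | IsOmnian N z} = ∅ :=
    Set.eq_empty_iff_forall_notMem.mpr (not_omnian_of_treeChild h)
  simp [omnianCount, this]

lemma treeChild_of_omnianCount_eq_zero {N : Network} (h : omnianCount N = 0) :
    IsTreeChild N := by
  apply isTreeChild_of_no_omnian
  intro z hz
  have h' : {z : ℕ | IsOmnian N z}.ncard = 0 := h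
  rw [Set.ncard_eq_zero (omnianFinite N)] at h'
  have hz' : z ∈ {z : ℕ | IsOmnian N z} := hz
  rw [h'] at hz'
  exact hz'

end Acyclic
section OmnianSet

variable {N N' : Network} {u v w x : ℕ}

namespace AddData

variable (D : AddData N u v w x N'.verts N'.arc)

include D

lemma mem_verts' {b : ℕ} (hb : b ∈ N.verts) : b ∈ N'.verts := by
  rw [D.hV]; exact Finset.mem_insert.mpr (Or.inr (Finset.mem_insert.mpr (Or.inr hb)))

lemma inDeg_pres {b : ℕ} (hb : b ∈ N.verts) : inDeg N' b = inDeg N b := D.inCard hb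

lemma outDeg_pres {a : ℕ} (ha : a ∈ N.verts) : outDeg N' a = outDeg N a := D.outCard ha

lemma isRet_pres {b : ℕ} (hb : b ∈ N.verts) : IsRet N' b ↔ IsRet N b := by
  unfold IsRet
  rw [D.inDeg_pres hb]
  simp [hb, D.mem_verts' hb]

lemma isLeaf_pres {b : ℕ} (hb : b ∈ N.verts) : IsLeaf N' b ↔ IsLeaf N b := by
  unfold IsLeaf
  rw [D.inDeg_pres hb, D.outDeg_pres hb]
  simp [hb, D.mem_verts' hb]

lemma inDeg_w' : inDeg N' w = 1 := by
  unfold inDeg; rw [D.inFilter_w]; exact Finset.card_singleton u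

lemma inDeg_x' : inDeg N' x = 1 := by
  unfold inDeg; rw [D.inFilter_x]; exact Finset.card_singleton w

lemma outDeg_w' : outDeg N' w = 2 := by
  unfold outDeg; rw [D.outFilter_w]
  rw [Finset.card_insert_of_notMem (Finset.notMem_singleton.mpr (Ne.symm D.xv))]
  exact rfl

lemma outDeg_x' : outDeg N' x = 0 := by
  unfold outDeg; rw [D.outFilter_x]; exact Finset.card_empty

lemma not_ret_w : ¬ IsRet N' w := by
  rintro ⟨_, h⟩; rw [D.inDeg_w'] at h; omega

lemma not_ret_x : ¬ IsRet N' x := by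
  rintro ⟨_, h⟩; rw [D.inDeg_x'] at h; omega

lemma omnianSet_eq (hR : N'.root = N.root) :
    {z : ℕ | IsOmnian N' z} = {z : ℕ | IsOmnian N z} \ {u} := by
  ext z
  simp only [Set.mem_setOf_eq, Set.mem_diff, Set.mem_singleton_iff]
  constructor
  · rintro ⟨⟨hzv', hzr', hnl'⟩, hall⟩
    rw [hR] at hzr'
    rw [D.hV] at hzv'
    rcases Finset.mem_insert.mp hzv' with rfl | hzv'
    · exact absurd (hall x ((D.hA z x).mpr (Or.inr (Or.inr (Or.inr ⟨rfl, rfl⟩))))) D.not_ret_x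
    rcases Finset.mem_insert.mp hzv' with rfl | hzv'
    · refine absurd ?_ hnl'
      refine ⟨?_, D.inDeg_x', D.outDeg_x'⟩
      rw [D.hV]; exact Finset.mem_insert.mpr (Or.inr (Finset.mem_insert_self _ _))
    · have hzu : z ≠ u := by
        rintro rfl
        exact D.not_ret_w (hall w ((D.hA z w).mpr (Or.inr (Or.inl ⟨rfl, rfl⟩))))
      refine ⟨⟨⟨hzv', hzr', fun hl => hnl' ((D.isLeaf_pres hzv').mpr hl)⟩, ?_⟩, hzu⟩
      intro c hc
      have hc' : N'.arc z c = true := (D.hA z c).mpr (Or.inl ⟨hc, fun h => hzu h.1⟩)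
      exact (D.isRet_pres (N.arc_mem _ _ hc).2).mp (hall c hc')
  · rintro ⟨⟨⟨hzv, hzr, hnl⟩, hall⟩, hzu⟩
    refine ⟨⟨D.mem_verts' hzv, hR ▸ hzr, fun hl => hnl ((D.isLeaf_pres hzv).mp hl)⟩, ?_⟩
    intro c hc'
    rcases (D.hA z c).mp hc' with h | h | h | h
    · exact (D.isRet_pres (N.arc_mem _ _ h.1).2).mpr (hall c h.1)
    · exact absurd h.1 hzu
    · exact absurd hzv (h.1 ▸ D.hwm)
    · exact absurd hzv (h.1 ▸ D.hwm)

end AddData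

lemma omnianSet_of_add {N N' : Network} {u v : ℕ} (h : IsLeafAdditionOn N N' u v) :
    {z : ℕ | IsOmnian N' z} = {z : ℕ | IsOmnian N z} \ {u} := by
  obtain ⟨huv, w, x, hwm, hxm, hwx, hV, hR, hA⟩ := h
  exact AddData.omnianSet_eq ⟨huv, hwm, hxm, hwx, hV, hA⟩ hR

/-- Construction of a leaf addition on any given arc. -/
lemma exists_add (N : Network) {u v : ℕ} (huv : N.arc u v = true) :
    ∃ N' : Network, IsLeafAdditionOn N N' u v := by
  classical
  obtain ⟨m, hm⟩ : ∃ m : ℕ, m = N.verts.sup id := ⟨_, rfl⟩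
  have hwm : m + 1 ∉ N.verts := fun h => by
    have := Finset.le_sup (f := id) h
    rw [← hm] at this; simp only [id_eq] at this; omega
  have hxm : m + 2 ∉ N.verts := fun h => by
    have := Finset.le_sup (f := id) h
    rw [← hm] at this; simp only [id_eq] at this; omega
  have hwx : m + 1 ≠ m + 2 := by omega
  set V' : Finset ℕ := insert (m + 1) (insert (m + 2) N.verts) with hV
  set A' : ℕ → ℕ → Bool := fun a b =>
    (N.arc a b && !(decide (a = u ∧ b = v))) || decide (a = u ∧ b = m + 1) ||
      decide (a = m + 1 ∧ b = v) || decide (a = m + 1 ∧ b = m + 2) with hAdef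
  have hA : ∀ a b : ℕ, (A' a b = true ↔
      ((N.arc a b = true ∧ ¬ (a = u ∧ b = v)) ∨ (a = u ∧ b = m + 1) ∨
        (a = m + 1 ∧ b = v) ∨ (a = m + 1 ∧ b = m + 2))) := by
    intro a b
    simp only [hAdef, Bool.or_eq_true, Bool.and_eq_true, Bool.not_eq_true',
      decide_eq_true_eq, decide_eq_false_iff_not]
    tauto
  have D : AddData N u v (m + 1) (m + 2) V' A' := ⟨huv, hwm, hxm, hwx, hV, hA⟩
  have hrw : N.root ≠ m + 1 := fun h => hwm (h ▸ N.root_mem)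
  have hrx : N.root ≠ m + 2 := fun h => hxm (h ▸ N.root_mem)
  have hrv : N.root ≠ v := by
    rintro rfl
    have h0 := N.root_indeg
    rw [Finset.card_eq_zero] at h0
    have : u ∈ N.verts.filter fun p => N.arc p N.root = true :=
      Finset.mem_filter.mpr ⟨D.hu, huv⟩
    rw [h0] at this
    exact absurd this (Finset.notMem_empty u)
  refine ⟨⟨V', A', N.root, ?_, ?_, D.acyclic', ?_, ?_, ?_⟩,
    huv, m + 1, m + 2, hwm, hxm, hwx, rfl, rfl, hA⟩
  · exact Finset.mem_insert.mpr (Or.inr (Finset.mem_insert.mpr (Or.inr N.root_mem)))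
  · intro a b h
    have hmem : ∀ c ∈ N.verts, c ∈ V' := fun c hc =>
      Finset.mem_insert.mpr (Or.inr (Finset.mem_insert.mpr (Or.inr hc)))
    have hwmem : m + 1 ∈ V' := Finset.mem_insert_self _ _
    have hxmem : m + 2 ∈ V' := Finset.mem_insert.mpr (Or.inr (Finset.mem_insert_self _ _))
    rcases (hA a b).mp h with h | ⟨rfl, rfl⟩ | ⟨rfl, rfl⟩ | ⟨rfl, rfl⟩
    · exact ⟨hmem _ (N.arc_mem _ _ h.1).1, hmem _ (N.arc_mem _ _ h.1).2⟩
    · exact ⟨hmem _ D.hu, hwmem⟩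
    · exact ⟨hwmem, hmem _ D.hv⟩
    · exact ⟨hwmem, hxmem⟩
  · rw [D.inFilter N.root_mem hrv]
    exact N.root_indeg
  · rw [D.outCard N.root_mem]
    exact N.root_outdeg
  · intro z hzv hzr
    rcases Finset.mem_insert.mp hzv with rfl | hzv
    · exact Or.inl ⟨by rw [D.inFilter_w]; exact Finset.card_singleton u,
        by rw [D.outFilter_w]; rw [Finset.card_insert_of_notMem
          (Finset.notMem_singleton.mpr (Ne.symm D.xv))]; exact rfl⟩
    rcases Finset.mem_insert.mp hzv with rfl | hzv
    · exact Or.inr (Or.inr ⟨by rw [D.inFilter_x]; exact Finset.card_singleton _,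
        by rw [D.outFilter_x]; exact Finset.card_empty⟩)
    · have hzr' : z ≠ N.root := hzr
      rcases N.nonroot_deg z hzv hzr' with ⟨h1, h2⟩ | ⟨h1, h2⟩ | ⟨h1, h2⟩
      · exact Or.inl ⟨by rw [D.inCard hzv]; exact h1, by rw [D.outCard hzv]; exact h2⟩
      · exact Or.inr (Or.inl ⟨by rw [D.inCard hzv]; exact h1, by rw [D.outCard hzv]; exact h2⟩)
      · exact Or.inr (Or.inr ⟨by rw [D.inCard hzv]; exact h1, by rw [D.outCard hzv]; exact h2⟩)

end OmnianSet

section Main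

lemma reach_of_count : ∀ (n : ℕ) (N : Network), omnianCount N = n →
    ReachableBy IsLeafAddition N n IsTreeChild := by
  intro n
  induction n with
  | zero =>
    intro N h
    exact ⟨fun _ => N, rfl, fun i hi => absurd hi (Nat.not_lt_zero i),
      treeChild_of_omnianCount_eq_zero h⟩
  | succ n ih =>
    intro N h
    have hne : {z : ℕ | IsOmnian N z}.Nonempty := by
      apply Set.nonempty_of_ncard_ne_zero
      have h' : {z : ℕ | IsOmnian N z}.ncard = n + 1 := h
      omega
    obtain ⟨u, hu⟩ := hne
    have hu' : IsOmnian N u := hu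
    have hnl : ¬ IsLeaf N u := hu'.1.2.2
    have hpos : 0 < (N.verts.filter fun b => N.arc u b = true).card := by
      rcases N.nonroot_deg u hu'.1.1 hu'.1.2.1 with ⟨_, h2⟩ | ⟨_, h2⟩ | ⟨h1, h2⟩
      · omega
      · omega
      · exact absurd ⟨hu'.1.1, h1, h2⟩ hnl
    obtain ⟨v, hv⟩ := Finset.card_pos.mp hpos
    have huv : N.arc u v = true := (Finset.mem_filter.mp hv).2
    obtain ⟨N', hadd⟩ := exists_add N huv
    have hset := omnianSet_of_add hadd
    have hc : omnianCount N' = n := by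
      have h' : {z : ℕ | IsOmnian N z}.ncard = n + 1 := h
      have : omnianCount N' = {z : ℕ | IsOmnian N' z}.ncard := rfl
      rw [this, hset, Set.ncard_diff_singleton_of_mem hu, h']
      omega
    obtain ⟨M, hM0, hMs, hMP⟩ := ih N' hc
    refine ⟨fun i => Nat.rec N (fun j _ => M j) i, rfl, ?_, ?_⟩
    · intro i hi
      cases i with
      | zero =>
        show IsLeafAddition N (M 0)
        rw [hM0]
        exact ⟨u, v, hadd⟩
      | succ j => exact hMs j (by omega)
    · exact hMP

lemma count_le_of_reach : ∀ (k : ℕ) (N : Network),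
    ReachableBy IsLeafAddition N k IsTreeChild → omnianCount N ≤ k := by
  intro k
  induction k with
  | zero =>
    rintro N ⟨M, h0, _, hP⟩
    rw [h0] at hP
    rw [omnianCount_eq_zero_of_treeChild hP]
  | succ k ih =>
    rintro N ⟨M, h0, hs, hP⟩
    have hstep := hs 0 (Nat.succ_pos k)
    rw [h0] at hstep
    obtain ⟨u, v, hadd⟩ := hstep
    have hset := omnianSet_of_add hadd
    have h1 : omnianCount N ≤ omnianCount (M 1) + 1 := by
      have hsub : {z : ℕ | IsOmnian N z} ⊆ insert u {z : ℕ | IsOmnian (M 1) z} := by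
        intro z hz
        rw [hset]
        by_cases hzu : z = u
        · exact Set.mem_insert_iff.mpr (Or.inl hzu)
        · exact Set.mem_insert_iff.mpr (Or.inr ⟨hz, hzu⟩)
      calc omnianCount N ≤ (insert u {z : ℕ | IsOmnian (M 1) z}).ncard :=
            Set.ncard_le_ncard hsub ((omnianFinite (M 1)).insert u)
        _ ≤ omnianCount (M 1) + 1 := Set.ncard_insert_le _ _
    have h2 := ih (M 1) ⟨fun i => M (i + 1), rfl, fun i hi => hs (i + 1) (by omega), hP⟩
    omega

end Main

/-- The minimum number of leaf additions needed to make `N`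
tree-child equals the number of omnians of `N`. -/
theorem LTC_eq_omnianCount (N : Network) : LTC N = omnianCount N := by
  have hmem : omnianCount N ∈ {k : ℕ | ReachableBy IsLeafAddition N k IsTreeChild} :=
    reach_of_count _ N rfl
  refine le_antisymm (Nat.sInf_le hmem) (le_csInf ⟨_, hmem⟩ ?_)
  exact fun k hk => count_le_of_reach k N hk

end PhyloNet
end

section
/- Let N be a binary phylogenetic network. If N has a highest reticulation r (a reticulation with no reticulation ancestors) such that every reticulation other than r has a leaf sibling, then N is orchard. -/
namespace PhyloNet

-- basics
lemma arc_ne {N : Network} {u v : ℕ} (h : N.arc u v = true) : u ≠ v := by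
  rintro rfl; exact N.acyclic u (Relation.TransGen.single h)

lemma arc_not_rev {N : Network} {u v : ℕ} (h : N.arc u v = true) : N.arc v u ≠ true := by
  intro h2; exact N.acyclic u (Relation.TransGen.head h (Relation.TransGen.single h2))

lemma mem_of_arc_left {N : Network} {u v : ℕ} (h : N.arc u v = true) : u ∈ N.verts :=
  (N.arc_mem u v h).1
lemma mem_of_arc_right {N : Network} {u v : ℕ} (h : N.arc u v = true) : v ∈ N.verts :=
  (N.arc_mem u v h).2

lemma outDeg_pos {N : Network} {v w : ℕ} (h : N.arc v w = true) : 0 < outDeg N v := by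
  refine Finset.card_pos.2 ⟨w, ?_⟩
  simp [outDeg, Finset.mem_filter, mem_of_arc_right h, h]

lemma inDeg_pos {N : Network} {u v : ℕ} (h : N.arc u v = true) : 0 < inDeg N v := by
  refine Finset.card_pos.2 ⟨u, ?_⟩
  simp [inDeg, Finset.mem_filter, mem_of_arc_left h, h]

lemma leaf_no_out {N : Network} {v w : ℕ} (hv : IsLeaf N v) : N.arc v w ≠ true := by
  intro h; have := outDeg_pos h; rw [hv.2.2] at this; exact absurd this (lt_irrefl 0)
  

lemma ne_root_of_arc {N : Network} {u v : ℕ} (h : N.arc u v = true) : v ≠ N.root := by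
  intro hv; subst hv
  have : u ∈ N.verts.filter fun u => N.arc u N.root = true := by
    simp [Finset.mem_filter, mem_of_arc_left h, h]
  have h0 := N.root_indeg
  rw [Finset.card_eq_zero] at h0
  simp [h0] at this

lemma deg_cases {N : Network} {v : ℕ} (hv : v ∈ N.verts) (hr : v ≠ N.root) :
    (inDeg N v = 1 ∧ outDeg N v = 2) ∨ (inDeg N v = 2 ∧ outDeg N v = 1) ∨
    (inDeg N v = 1 ∧ outDeg N v = 0) := N.nonroot_deg v hv hr

lemma filter_eq_pair {s : Finset ℕ} {a b : ℕ} (hab : a ≠ b) (ha : a ∈ s) (hb : b ∈ s)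
    (hcard : s.card = 2) : s = {a, b} := by
  symm
  apply Finset.eq_of_subset_of_card_le
  · intro x hx; simp at hx; rcases hx with rfl | rfl <;> assumption
  · rw [hcard, Finset.card_insert_of_notMem (by simp [hab]), Finset.card_singleton]

lemma filter_eq_single {s : Finset ℕ} {a : ℕ} (ha : a ∈ s) (hcard : s.card = 1) : s = {a} := by
  symm
  apply Finset.eq_of_subset_of_card_le
  · intro x hx; simp at hx; subst hx; assumption
  · simp [hcard]

lemma unique_child {N : Network} {v a b : ℕ} (h1 : outDeg N v = 1)
    (ha : N.arc v a = true) (hb : N.arc v b = true) : a = b := by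
  have hs := filter_eq_single (s := N.verts.filter fun w => N.arc v w = true)
    (a := a) (by simp [Finset.mem_filter, mem_of_arc_right ha, ha]) h1
  have : b ∈ N.verts.filter fun w => N.arc v w = true := by
    simp [Finset.mem_filter, mem_of_arc_right hb, hb]
  rw [hs] at this
  have := Finset.mem_singleton.1 this; omega

lemma unique_parent {N : Network} {v a b : ℕ} (h1 : inDeg N v = 1)
    (ha : N.arc a v = true) (hb : N.arc b v = true) : a = b := by
  have hs := filter_eq_single (s := N.verts.filter fun u => N.arc u v = true)
    (a := a) (by simp [Finset.mem_filter, mem_of_arc_left ha, ha]) h1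
  have : b ∈ N.verts.filter fun u => N.arc u v = true := by
    simp [Finset.mem_filter, mem_of_arc_left hb, hb]
  rw [hs] at this
  have := Finset.mem_singleton.1 this; omega

lemma child_mem_pair {N : Network} {v a b : ℕ} (h2 : outDeg N v = 2)
    (ha : N.arc v a = true) (hb : N.arc v b = true) (hab : a ≠ b) :
    ∀ w, N.arc v w = true → w = a ∨ w = b := by
  intro w hw
  have hs := filter_eq_pair (s := N.verts.filter fun w => N.arc v w = true) hab
    (by simp [Finset.mem_filter, mem_of_arc_right ha, ha])
    (by simp [Finset.mem_filter, mem_of_arc_right hb, hb]) h2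
  have : w ∈ N.verts.filter fun w => N.arc v w = true := by
    simp [Finset.mem_filter, mem_of_arc_right hw, hw]
  rw [hs] at this; simpa using this

lemma parent_mem_pair {N : Network} {v a b : ℕ} (h2 : inDeg N v = 2)
    (ha : N.arc a v = true) (hb : N.arc b v = true) (hab : a ≠ b) :
    ∀ u, N.arc u v = true → u = a ∨ u = b := by
  intro u hu
  have hs := filter_eq_pair (s := N.verts.filter fun u => N.arc u v = true) hab
    (by simp [Finset.mem_filter, mem_of_arc_left ha, ha])
    (by simp [Finset.mem_filter, mem_of_arc_left hb, hb]) h2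
  have : u ∈ N.verts.filter fun u => N.arc u v = true := by
    simp [Finset.mem_filter, mem_of_arc_left hu, hu]
  rw [hs] at this; simpa using this

lemma other_parent {N : Network} {v a : ℕ} (h2 : inDeg N v = 2)
    (ha : N.arc a v = true) : ∃ b, N.arc b v = true ∧ b ≠ a := by
  classical
  have hmem : a ∈ N.verts.filter fun u => N.arc u v = true := by
    simp [Finset.mem_filter, mem_of_arc_left ha, ha]
  have : 0 < ((N.verts.filter fun u => N.arc u v = true).erase a).card := by
    rw [Finset.card_erase_of_mem hmem]
    unfold inDeg at h2; omega
  obtain ⟨b, hb⟩ := Finset.card_pos.1 this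
  rw [Finset.mem_erase, Finset.mem_filter] at hb
  exact ⟨b, hb.2.2, hb.1⟩

lemma other_child {N : Network} {v a : ℕ} (h2 : outDeg N v = 2)
    (ha : N.arc v a = true) : ∃ b, N.arc v b = true ∧ b ≠ a := by
  classical
  have hmem : a ∈ N.verts.filter fun w => N.arc v w = true := by
    simp [Finset.mem_filter, mem_of_arc_right ha, ha]
  have : 0 < ((N.verts.filter fun w => N.arc v w = true).erase a).card := by
    rw [Finset.card_erase_of_mem hmem]
    unfold outDeg at h2; omega
  obtain ⟨b, hb⟩ := Finset.card_pos.1 this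
  rw [Finset.mem_erase, Finset.mem_filter] at hb
  exact ⟨b, hb.2.2, hb.1⟩

lemma exists_parent {N : Network} {v : ℕ} (hv : v ∈ N.verts) (hr : v ≠ N.root) :
    ∃ u, N.arc u v = true := by
  have := deg_cases hv hr
  have hpos : 0 < inDeg N v := by omega
  obtain ⟨u, hu⟩ := Finset.card_pos.1 hpos
  rw [Finset.mem_filter] at hu
  exact ⟨u, hu.2⟩

lemma root_unique_child {N : Network} {a b : ℕ} (ha : N.arc N.root a = true)
    (hb : N.arc N.root b = true) : a = b := by
  have h1 : outDeg N N.root = 1 := N.root_outdeg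
  exact unique_child h1 ha hb

lemma exists_root_child (N : Network) : ∃ c, N.arc N.root c = true := by
  have h1 : outDeg N N.root = 1 := N.root_outdeg
  obtain ⟨c, hc⟩ := Finset.card_pos.1 (by omega : 0 < outDeg N N.root)
  rw [Finset.mem_filter] at hc
  exact ⟨c, hc.2⟩

lemma ne_root_of_outdeg_two {N : Network} {v a b : ℕ} (ha : N.arc v a = true)
    (hb : N.arc v b = true) (hab : a ≠ b) : v ≠ N.root := by
  rintro rfl; exact hab (root_unique_child ha hb)

lemma ret_ne_root {N : Network} {v : ℕ} (h : IsRet N v) : v ≠ N.root := by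
  rintro rfl
  have h0 : inDeg N N.root = 0 := N.root_indeg
  have := h.2; rw [h0] at this; omega

lemma ret_deg {N : Network} {v : ℕ} (h : IsRet N v) : inDeg N v = 2 ∧ outDeg N v = 1 := by
  rcases deg_cases h.1 (ret_ne_root h) with h' | h' | h' <;>
    first | (exact ⟨h.2, h'.2⟩) | (exfalso; rw [h.2] at h'; omega)

lemma ret_not_leaf {N : Network} {v : ℕ} (h : IsRet N v) : ¬ IsLeaf N v := by
  intro hl; have := (ret_deg h).2; rw [hl.2.2] at this; omega


open Classical in
noncomputable def descCard (N : Network) (v : ℕ) : ℕ :=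
  (N.verts.filter fun w => Relation.TransGen (fun a b : ℕ => N.arc a b = true) v w).card

lemma descCard_lt {N : Network} {v w : ℕ} (h : N.arc v w = true) :
    descCard N w < descCard N v := by
  classical
  unfold descCard
  apply Finset.card_lt_card
  constructor
  · intro u hu
    rw [Finset.mem_filter] at hu ⊢
    exact ⟨hu.1, Relation.TransGen.head h hu.2⟩
  · intro hsub
    have hw : w ∈ N.verts.filter fun u =>
        Relation.TransGen (fun a b : ℕ => N.arc a b = true) v u := by
      rw [Finset.mem_filter]
      exact ⟨mem_of_arc_right h, Relation.TransGen.single h⟩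
    have := hsub hw
    rw [Finset.mem_filter] at this
    exact N.acyclic w this.2

lemma transGen_transfer {R R' : ℕ → ℕ → Prop} {S : Set ℕ}
    (h1 : ∀ a b, R' a b → R a b ∨ b ∈ S) (h2 : ∀ s ∈ S, ∀ c, ¬ R' s c)
    {a b : ℕ} (h : Relation.TransGen R' a b) :
    Relation.TransGen R a b ∨ b ∈ S := by
  induction h with
  | single h =>
    rcases h1 _ _ h with h | h
    · exact Or.inl (Relation.TransGen.single h)
    · exact Or.inr h
  | tail hab hbc ih =>
    rcases ih with ih | ih
    · rcases h1 _ _ hbc with h | h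
      · exact Or.inl (Relation.TransGen.tail ih h)
      · exact Or.inr h
    · exact absurd hbc (h2 _ ih _)

lemma acyclic_transfer {R R' : ℕ → ℕ → Prop} {S : Set ℕ}
    (h1 : ∀ a b, R' a b → R a b ∨ b ∈ S) (h2 : ∀ s ∈ S, ∀ c, ¬ R' s c)
    (hR : ∀ v, ¬ Relation.TransGen R v v) : ∀ v, ¬ Relation.TransGen R' v v := by
  intro v hv
  rcases transGen_transfer h1 h2 hv with h | h
  · exact hR v h
  · rcases Relation.TransGen.head'_iff.1 hv with ⟨c, hc, -⟩
    exact h2 _ h _ hc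


lemma two_le_outDeg {N : Network} {v a b : ℕ} (ha : N.arc v a = true)
    (hb : N.arc v b = true) (hab : a ≠ b) : 2 ≤ outDeg N v := by
  have : ({a, b} : Finset ℕ) ⊆ N.verts.filter fun w => N.arc v w = true := by
    intro w hw; simp at hw
    rcases hw with rfl | rfl <;> simp [Finset.mem_filter, mem_of_arc_right ha, ha,
      mem_of_arc_right hb, hb]
  calc 2 = ({a, b} : Finset ℕ).card := by
        rw [Finset.card_insert_of_notMem (by simp [hab]), Finset.card_singleton]
    _ ≤ _ := Finset.card_le_card this

lemma cherry_reduce (N : Network) {x y p q : ℕ} (hx : IsLeaf N x) (hy : IsLeaf N y)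
    (hxy : x ≠ y) (hpx : N.arc p x = true) (hpy : N.arc p y = true)
    (hqp : N.arc q p = true) :
    ∃ N' : Network, ReducesCherry N N' x y ∧
      N'.verts = (N.verts.erase x).erase p ∧ N'.root = N.root ∧
      (∀ a b : ℕ, N'.arc a b = true ↔
        (N.arc a b = true ∧ a ≠ p ∧ b ≠ p ∧ b ≠ x) ∨ (a = q ∧ b = y)) ∧
      (∀ v ∈ N'.verts, inDeg N' v = inDeg N v ∧ outDeg N' v = outDeg N v) ∧
      (∀ a b : ℕ, Relation.TransGen (fun u w => N'.arc u w = true) a b →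
        Relation.TransGen (fun u w => N.arc u w = true) a b ∨ b = y) := by
  classical
  -- basic facts
  have hproot : p ≠ N.root := ne_root_of_outdeg_two hpx hpy hxy
  have hpmem : p ∈ N.verts := mem_of_arc_left hpx
  have hpdeg := deg_cases hpmem hproot
  have hp2 : 2 ≤ outDeg N p := two_le_outDeg hpx hpy hxy
  have hpin : inDeg N p = 1 := by omega
  have hpout : outDeg N p = 2 := by omega
  have hqp' : q ≠ p := arc_ne hqp
  have hpx' : p ≠ x := arc_ne hpx
  have hpy' : p ≠ y := arc_ne hpy
  have hqx : q ≠ x := fun h => leaf_no_out hx (h ▸ hqp)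
  have hqy : q ≠ y := fun h => leaf_no_out hy (h ▸ hqp)
  have hxroot : x ≠ N.root := ne_root_of_arc hpx
  have hyroot : y ≠ N.root := ne_root_of_arc hpy
  have hxpar : ∀ u, N.arc u x = true → u = p := fun u hu => unique_parent hx.2.1 hu hpx
  have hypar : ∀ u, N.arc u y = true → u = p := fun u hu => unique_parent hy.2.1 hu hpy
  have hppar : ∀ u, N.arc u p = true → u = q := fun u hu => unique_parent hpin hu hqp
  have hpch : ∀ w, N.arc p w = true → w = x ∨ w = y := child_mem_pair hpout hpx hpy hxy
  set V : Finset ℕ := (N.verts.erase x).erase p with hV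
  set A : ℕ → ℕ → Bool := fun a b =>
    ((N.arc a b && !(a == p) && !(b == p) && !(b == x)) || ((a == q) && (b == y))) with hA
  have memV : ∀ v, v ∈ V ↔ v ∈ N.verts ∧ v ≠ x ∧ v ≠ p := by
    intro v; simp [hV, Finset.mem_erase]; tauto
  have arcA : ∀ a b, A a b = true ↔
      (N.arc a b = true ∧ a ≠ p ∧ b ≠ p ∧ b ≠ x) ∨ (a = q ∧ b = y) := by
    intro a b
    simp [hA, Bool.or_eq_true, Bool.and_eq_true, Bool.not_eq_true', beq_iff_eq,
      beq_eq_false_iff_ne]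
    tauto
  have hqV : q ∈ V := (memV q).2 ⟨mem_of_arc_left hqp, hqx, hqp'⟩
  have hyV : y ∈ V := (memV y).2 ⟨hy.1, fun h => hxy h.symm, fun h => hpy' h.symm⟩
  -- in-degrees
  have hin : ∀ v ∈ V, (V.filter fun u => A u v = true).card = inDeg N v := by
    intro v hv
    rw [memV] at hv
    obtain ⟨hvm, hvx, hvp⟩ := hv
    by_cases hvy : v = y
    · subst hvy
      have : (V.filter fun u => A u v = true) = {q} := by
        ext a
        simp only [Finset.mem_filter, Finset.mem_singleton, arcA, memV]
        constructor
        · rintro ⟨-, ⟨ha, hap, -, -⟩ | ⟨rfl, -⟩⟩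
          · exact absurd (hypar a ha) hap
          · rfl
        · rintro rfl
          exact ⟨⟨mem_of_arc_left hqp, hqx, hqp'⟩, Or.inr ⟨rfl, trivial⟩⟩
      rw [this, Finset.card_singleton, hy.2.1]
    · have : (V.filter fun u => A u v = true) = N.verts.filter fun u => N.arc u v = true := by
        ext a
        simp only [Finset.mem_filter, arcA, memV]
        constructor
        · rintro ⟨⟨ham, -, -⟩, ⟨ha, -, -, -⟩ | ⟨-, rfl⟩⟩
          · exact ⟨ham, ha⟩
          · exact absurd rfl hvy
        · rintro ⟨ham, ha⟩
          have hap : a ≠ p := by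
            rintro rfl
            rcases hpch v ha with rfl | rfl
            · exact hvx rfl
            · exact hvy rfl
          have hax : a ≠ x := fun h => leaf_no_out hx (h ▸ ha)
          exact ⟨⟨ham, hax, hap⟩, Or.inl ⟨ha, hap, hvp, hvx⟩⟩
      rw [this]; rfl
  -- out-degrees
  have hout : ∀ v ∈ V, (V.filter fun w => A v w = true).card = outDeg N v := by
    intro v hv
    rw [memV] at hv
    obtain ⟨hvm, hvx, hvp⟩ := hv
    by_cases hvq : v = q
    · subst hvq
      have hkey : (V.filter fun w => A v w = true) =
          insert y ((N.verts.filter fun w => N.arc v w = true).erase p) := by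
        ext w
        simp only [Finset.mem_filter, arcA, memV, Finset.mem_insert, Finset.mem_erase]
        constructor
        · rintro ⟨⟨hwm, hwx, hwp⟩, ⟨ha, -, -, -⟩ | ⟨-, rfl⟩⟩
          · exact Or.inr ⟨hwp, hwm, ha⟩
          · exact Or.inl rfl
        · rintro (rfl | ⟨hwp, hwm, ha⟩)
          · exact ⟨⟨hy.1, fun h => hxy h.symm, fun h => hpy' h.symm⟩, Or.inr ⟨trivial, rfl⟩⟩
          · have hwx : w ≠ x := by
              rintro rfl; exact hqp' (hxpar v ha)
            exact ⟨⟨hwm, hwx, hwp⟩, Or.inl ⟨ha, hqp', hwp, hwx⟩⟩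
      rw [hkey]
      have hpf : p ∈ N.verts.filter fun w => N.arc v w = true := by
        simp [Finset.mem_filter, hpmem, hqp]
      have hyf : y ∉ (N.verts.filter fun w => N.arc v w = true).erase p := by
        simp only [Finset.mem_erase, Finset.mem_filter]
        rintro ⟨-, -, ha⟩
        exact hqp' (hypar v ha)
      rw [Finset.card_insert_of_notMem hyf, Finset.card_erase_of_mem hpf]
      have : 0 < outDeg N v := outDeg_pos hqp
      unfold outDeg at this ⊢
      omega
    · have : (V.filter fun w => A v w = true) = N.verts.filter fun w => N.arc v w = true := by
        ext w
        simp only [Finset.mem_filter, arcA, memV]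
        constructor
        · rintro ⟨⟨hwm, -, -⟩, ⟨ha, -, -, -⟩ | ⟨rfl, -⟩⟩
          · exact ⟨hwm, ha⟩
          · exact absurd rfl hvq
        · rintro ⟨hwm, ha⟩
          have hwp : w ≠ p := by rintro rfl; exact hvq (hppar v ha)
          have hwx : w ≠ x := by rintro rfl; exact hvp (hxpar v ha)
          exact ⟨⟨hwm, hwx, hwp⟩, Or.inl ⟨ha, hvp, hwp, hwx⟩⟩
      rw [this]; rfl
  -- transfer setup
  have htrans1 : ∀ a b, A a b = true → N.arc a b = true ∨ b ∈ ({y} : Set ℕ) := by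
    intro a b h
    rcases (arcA a b).1 h with ⟨h, -, -, -⟩ | ⟨-, rfl⟩
    · exact Or.inl h
    · exact Or.inr rfl
  have htrans2 : ∀ s ∈ ({y} : Set ℕ), ∀ c, ¬ A s c = true := by
    intro s hs c h
    have hs' : s = y := hs
    rcases (arcA s c).1 h with ⟨h2, -, -, -⟩ | ⟨hq, -⟩
    · exact leaf_no_out hy (hs' ▸ h2)
    · exact hqy (by rw [← hq, hs'])
  have hrootV : N.root ∈ V := (memV _).2 ⟨N.root_mem, Ne.symm hxroot, Ne.symm hproot⟩
  refine ⟨⟨V, A, N.root, hrootV, ?_, ?_, ?_, ?_, ?_⟩, ?_, rfl, rfl, arcA, ?_, ?_⟩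
  · -- arc_mem
    intro a b h
    rcases (arcA a b).1 h with ⟨h, hap, hbp, hbx⟩ | ⟨rfl, rfl⟩
    · have hax : a ≠ x := fun he => leaf_no_out hx (he ▸ h)
      exact ⟨(memV a).2 ⟨mem_of_arc_left h, hax, hap⟩,
        (memV b).2 ⟨mem_of_arc_right h, hbx, hbp⟩⟩
    · exact ⟨hqV, hyV⟩
  · exact acyclic_transfer htrans1 htrans2 N.acyclic
  · -- root_indeg
    rw [Finset.card_eq_zero, Finset.eq_empty_iff_forall_notMem]
    intro a ha
    rw [Finset.mem_filter] at ha
    rcases (arcA a N.root).1 ha.2 with ⟨h, -, -, -⟩ | ⟨-, he⟩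
    · exact ne_root_of_arc h rfl
    · exact hyroot he.symm
  · exact (hout N.root hrootV).trans N.root_outdeg
  · -- nonroot_deg
    intro v hv hvr
    rw [hin v hv, hout v hv]
    exact deg_cases ((memV v).1 hv).1 hvr
  · exact ⟨p, q, hx, hy, hxy, hpx, hpy, hqp, rfl, rfl, arcA⟩
  · exact fun v hv => ⟨hin v hv, hout v hv⟩
  · intro a b h
    rcases transGen_transfer htrans1 htrans2 h with h | h
    · exact Or.inl h
    · exact Or.inr h

set_option maxHeartbeats 1000000 in
lemma retcherry_reduce (N : Network) {x y px py z q : ℕ} (hx : IsLeaf N x) (hy : IsLeaf N y)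
    (hret : IsRet N px) (hpxx : N.arc px x = true) (hpypx : N.arc py px = true)
    (hpyy : N.arc py y = true) (hz : N.arc z px = true) (hzpy : z ≠ py)
    (hq : N.arc q py = true) :
    ∃ N' : Network, ReducesRetCherry N N' x y ∧
      N'.verts = (N.verts.erase px).erase py ∧ N'.root = N.root ∧
      (∀ a b : ℕ, N'.arc a b = true ↔
        (N.arc a b = true ∧ a ≠ px ∧ a ≠ py ∧ b ≠ px ∧ b ≠ py) ∨
          (a = z ∧ b = x) ∨ (a = q ∧ b = y)) ∧
      (∀ v ∈ N'.verts, inDeg N' v = inDeg N v ∧ outDeg N' v = outDeg N v) ∧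
      (∀ a b : ℕ, Relation.TransGen (fun u w => N'.arc u w = true) a b →
        Relation.TransGen (fun u w => N.arc u w = true) a b ∨ b = x ∨ b = y) := by
  classical
  have hpxdeg := ret_deg hret
  have hpxroot : px ≠ N.root := ret_ne_root hret
  have hpymem : py ∈ N.verts := mem_of_arc_left hpypx
  have hpxy : px ≠ y := by
    intro h; have h0 := hy.2.2; rw [← h] at h0; rw [h0] at hpxdeg; omega
  have hpyroot : py ≠ N.root := ne_root_of_outdeg_two hpypx hpyy hpxy
  have hpy2 : 2 ≤ outDeg N py := two_le_outDeg hpypx hpyy hpxy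
  have hpydeg' := deg_cases hpymem hpyroot
  have hpyin : inDeg N py = 1 := by omega
  have hpyout : outDeg N py = 2 := by omega
  have hpypx' : py ≠ px := arc_ne hpypx
  have hpxch : ∀ w, N.arc px w = true → w = x := fun w hw => unique_child hpxdeg.2 hw hpxx
  have hpxpar : ∀ u, N.arc u px = true → u = py ∨ u = z :=
    parent_mem_pair hret.2 hpypx hz (Ne.symm hzpy)
  have hpych : ∀ w, N.arc py w = true → w = px ∨ w = y :=
    child_mem_pair hpyout hpypx hpyy hpxy
  have hpypar : ∀ u, N.arc u py = true → u = q := fun u hu => unique_parent hpyin hu hq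
  have hxpar : ∀ u, N.arc u x = true → u = px := fun u hu => unique_parent hx.2.1 hu hpxx
  have hypar : ∀ u, N.arc u y = true → u = py := fun u hu => unique_parent hy.2.1 hu hpyy
  have hxy : x ≠ y := by
    intro h; exact hpypx' (hypar px (h ▸ hpxx)).symm
  have hpxx' : px ≠ x := arc_ne hpxx
  have hpyy' : py ≠ y := arc_ne hpyy
  have hzpx : z ≠ px := arc_ne hz
  have hqpy : q ≠ py := arc_ne hq
  have hqpx : q ≠ px := by
    intro h; exact arc_not_rev hpypx (h ▸ hq)
  have hzx : z ≠ x := fun h => leaf_no_out hx (h ▸ hz)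
  have hzy : z ≠ y := fun h => leaf_no_out hy (h ▸ hz)
  have hqx : q ≠ x := fun h => leaf_no_out hx (h ▸ hq)
  have hqy : q ≠ y := fun h => leaf_no_out hy (h ▸ hq)
  have hpyx : py ≠ x := by
    intro h; have h0 := hx.2.2; rw [← h] at h0; omega
  have hxroot : x ≠ N.root := ne_root_of_arc hpxx
  have hyroot : y ≠ N.root := ne_root_of_arc hpyy
  set V : Finset ℕ := (N.verts.erase px).erase py with hV
  set A : ℕ → ℕ → Bool := fun a b =>
    ((N.arc a b && !(a == px) && !(a == py) && !(b == px) && !(b == py)) ||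
      ((a == z) && (b == x)) || ((a == q) && (b == y))) with hA
  have memV : ∀ v, v ∈ V ↔ v ∈ N.verts ∧ v ≠ px ∧ v ≠ py := by
    intro v; simp [hV, Finset.mem_erase]; tauto
  have arcA : ∀ a b, A a b = true ↔
      (N.arc a b = true ∧ a ≠ px ∧ a ≠ py ∧ b ≠ px ∧ b ≠ py) ∨
        (a = z ∧ b = x) ∨ (a = q ∧ b = y) := by
    intro a b
    simp [hA, Bool.or_eq_true, Bool.and_eq_true, Bool.not_eq_true', beq_iff_eq,
      beq_eq_false_iff_ne]
    tauto
  have hxV : x ∈ V := (memV x).2 ⟨hx.1, Ne.symm hpxx', Ne.symm hpyx⟩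
  have hyV : y ∈ V := (memV y).2 ⟨hy.1, Ne.symm hpxy, Ne.symm hpyy'⟩
  have hzV : z ∈ V := (memV z).2 ⟨mem_of_arc_left hz, hzpx, hzpy⟩
  have hqV : q ∈ V := (memV q).2 ⟨mem_of_arc_left hq, hqpx, hqpy⟩
  have hin : ∀ v ∈ V, (V.filter fun u => A u v = true).card = inDeg N v := by
    intro v hv
    obtain ⟨hvm, hvpx, hvpy⟩ := (memV v).1 hv
    by_cases hvx : v = x
    · subst hvx
      have : (V.filter fun u => A u v = true) = {z} := by
        ext a
        simp only [Finset.mem_filter, Finset.mem_singleton, arcA, memV]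
        constructor
        · rintro ⟨⟨-, hapx, -⟩, ⟨ha, -, -, -, -⟩ | ⟨rfl, -⟩ | ⟨-, hh⟩⟩
          · exact absurd (hxpar a ha) hapx
          · rfl
          · exact absurd hh hxy
        · rintro rfl
          exact ⟨⟨mem_of_arc_left hz, hzpx, hzpy⟩, Or.inr (Or.inl ⟨rfl, trivial⟩)⟩
      rw [this, Finset.card_singleton, hx.2.1]
    · by_cases hvy : v = y
      · subst hvy
        have : (V.filter fun u => A u v = true) = {q} := by
          ext a
          simp only [Finset.mem_filter, Finset.mem_singleton, arcA, memV]
          constructor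
          · rintro ⟨⟨-, -, hapy⟩, ⟨ha, -, -, -, -⟩ | ⟨-, hh⟩ | ⟨rfl, -⟩⟩
            · exact absurd (hypar a ha) hapy
            · exact absurd hh hvx
            · rfl
          · rintro rfl
            exact ⟨⟨mem_of_arc_left hq, hqpx, hqpy⟩, Or.inr (Or.inr ⟨rfl, trivial⟩)⟩
        rw [this, Finset.card_singleton, hy.2.1]
      · have : (V.filter fun u => A u v = true) = N.verts.filter fun u => N.arc u v = true := by
          ext a
          simp only [Finset.mem_filter, arcA, memV]
          constructor
          · rintro ⟨⟨ham, -, -⟩, ⟨ha, -, -, -, -⟩ | ⟨-, hh⟩ | ⟨-, hh⟩⟩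
            · exact ⟨ham, ha⟩
            · exact absurd hh hvx
            · exact absurd hh hvy
          · rintro ⟨ham, ha⟩
            have hapx : a ≠ px := by rintro rfl; exact hvx (hpxch v ha)
            have hapy : a ≠ py := by
              rintro rfl
              rcases hpych v ha with rfl | rfl
              · exact hvpx rfl
              · exact hvy rfl
            have hax : a ≠ x := fun h => leaf_no_out hx (h ▸ ha)
            have hay : a ≠ y := fun h => leaf_no_out hy (h ▸ ha)
            exact ⟨⟨ham, hapx, hapy⟩, Or.inl ⟨ha, hapx, hapy, hvpx, hvpy⟩⟩
        rw [this]; rfl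
  have hout : ∀ v ∈ V, (V.filter fun w => A v w = true).card = outDeg N v := by
    intro v hv
    obtain ⟨hvm, hvpx, hvpy⟩ := (memV v).1 hv
    by_cases hvz : v = z
    · by_cases hvq : v = q
      · -- v = z = q
        have hkey : (V.filter fun w => A v w = true) = insert x (insert y
            (((N.verts.filter fun w => N.arc v w = true).erase px).erase py)) := by
          ext w
          simp only [Finset.mem_filter, arcA, memV, Finset.mem_insert, Finset.mem_erase]
          constructor
          · rintro ⟨⟨hwm, hwpx, hwpy⟩, ⟨ha, -, -, -, -⟩ | ⟨-, rfl⟩ | ⟨-, rfl⟩⟩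
            · exact Or.inr (Or.inr ⟨hwpy, hwpx, hwm, ha⟩)
            · exact Or.inl rfl
            · exact Or.inr (Or.inl rfl)
          · rintro (hwx | hwy | ⟨hwpy, hwpx, hwm, ha⟩)
            · exact ⟨by rw [hwx]; exact (memV x).1 hxV, Or.inr (Or.inl ⟨hvz, hwx⟩)⟩
            · exact ⟨by rw [hwy]; exact (memV y).1 hyV, Or.inr (Or.inr ⟨hvq, hwy⟩)⟩
            · exact ⟨⟨hwm, hwpx, hwpy⟩, Or.inl ⟨ha, hvpx, hvpy, hwpx, hwpy⟩⟩
        rw [hkey]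
        have hpxf : px ∈ N.verts.filter fun w => N.arc v w = true := by
          simp only [Finset.mem_filter]; exact ⟨hret.1, hvz ▸ hz⟩
        have hpyf : py ∈ (N.verts.filter fun w => N.arc v w = true).erase px := by
          simp only [Finset.mem_erase, Finset.mem_filter]
          exact ⟨hpypx', hpymem, hvq ▸ hq⟩
        have hxf : x ∉ insert y (((N.verts.filter fun w => N.arc v w = true).erase px).erase py) := by
          simp only [Finset.mem_insert, Finset.mem_erase, Finset.mem_filter]
          rintro (h | ⟨-, -, -, ha⟩)
          · exact hxy h
          · exact hvpx (hxpar v ha)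
        have hyf : y ∉ ((N.verts.filter fun w => N.arc v w = true).erase px).erase py := by
          simp only [Finset.mem_erase, Finset.mem_filter]
          rintro ⟨-, -, -, ha⟩
          exact hvpy (hypar v ha)
        rw [Finset.card_insert_of_notMem hxf, Finset.card_insert_of_notMem hyf,
          Finset.card_erase_of_mem hpyf, Finset.card_erase_of_mem hpxf]
        have h2 : 2 ≤ outDeg N v := two_le_outDeg (hvz ▸ hz) (hvq ▸ hq) (Ne.symm hpypx')
        unfold outDeg at h2 ⊢
        omega
      · -- v = z, v ≠ q
        have hkey : (V.filter fun w => A v w = true) =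
            insert x ((N.verts.filter fun w => N.arc v w = true).erase px) := by
          ext w
          simp only [Finset.mem_filter, arcA, memV, Finset.mem_insert, Finset.mem_erase]
          constructor
          · rintro ⟨⟨hwm, hwpx, hwpy⟩, ⟨ha, -, -, -, -⟩ | ⟨-, rfl⟩ | ⟨hh, -⟩⟩
            · exact Or.inr ⟨hwpx, hwm, ha⟩
            · exact Or.inl rfl
            · exact absurd hh hvq
          · rintro (hwx | ⟨hwpx, hwm, ha⟩)
            · exact ⟨by rw [hwx]; exact (memV x).1 hxV, Or.inr (Or.inl ⟨hvz, hwx⟩)⟩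
            · have hwpy : w ≠ py := by rintro rfl; exact hvq (hpypar v ha)
              exact ⟨⟨hwm, hwpx, hwpy⟩, Or.inl ⟨ha, hvpx, hvpy, hwpx, hwpy⟩⟩
        rw [hkey]
        have hpxf : px ∈ N.verts.filter fun w => N.arc v w = true := by
          simp only [Finset.mem_filter]; exact ⟨hret.1, hvz ▸ hz⟩
        have hxf : x ∉ (N.verts.filter fun w => N.arc v w = true).erase px := by
          simp only [Finset.mem_erase, Finset.mem_filter]
          rintro ⟨-, -, ha⟩
          exact hvpx (hxpar v ha)
        rw [Finset.card_insert_of_notMem hxf, Finset.card_erase_of_mem hpxf]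
        have : 0 < outDeg N v := outDeg_pos (hvz ▸ hz)
        unfold outDeg at this ⊢
        omega
    · by_cases hvq : v = q
      · -- v = q, v ≠ z
        have hkey : (V.filter fun w => A v w = true) =
            insert y ((N.verts.filter fun w => N.arc v w = true).erase py) := by
          ext w
          simp only [Finset.mem_filter, arcA, memV, Finset.mem_insert, Finset.mem_erase]
          constructor
          · rintro ⟨⟨hwm, hwpx, hwpy⟩, ⟨ha, -, -, -, -⟩ | ⟨hh, -⟩ | ⟨-, rfl⟩⟩
            · exact Or.inr ⟨hwpy, hwm, ha⟩
            · exact absurd hh hvz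
            · exact Or.inl rfl
          · rintro (hwy | ⟨hwpy, hwm, ha⟩)
            · exact ⟨by rw [hwy]; exact (memV y).1 hyV, Or.inr (Or.inr ⟨hvq, hwy⟩)⟩
            · have hwpx : w ≠ px := by
                rintro rfl
                rcases hpxpar v ha with rfl | rfl
                · exact hvpy rfl
                · exact hvz rfl
              exact ⟨⟨hwm, hwpx, hwpy⟩, Or.inl ⟨ha, hvpx, hvpy, hwpx, hwpy⟩⟩
        rw [hkey]
        have hpyf : py ∈ N.verts.filter fun w => N.arc v w = true := by
          simp only [Finset.mem_filter]; exact ⟨hpymem, hvq ▸ hq⟩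
        have hyf : y ∉ (N.verts.filter fun w => N.arc v w = true).erase py := by
          simp only [Finset.mem_erase, Finset.mem_filter]
          rintro ⟨-, -, ha⟩
          exact hvpy (hypar v ha)
        rw [Finset.card_insert_of_notMem hyf, Finset.card_erase_of_mem hpyf]
        have : 0 < outDeg N v := outDeg_pos (hvq ▸ hq)
        unfold outDeg at this ⊢
        omega
      · -- generic
        have : (V.filter fun w => A v w = true) = N.verts.filter fun w => N.arc v w = true := by
          ext w
          simp only [Finset.mem_filter, arcA, memV]
          constructor
          · rintro ⟨⟨hwm, -, -⟩, ⟨ha, -, -, -, -⟩ | ⟨hh, -⟩ | ⟨hh, -⟩⟩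
            · exact ⟨hwm, ha⟩
            · exact absurd hh hvz
            · exact absurd hh hvq
          · rintro ⟨hwm, ha⟩
            have hwpx : w ≠ px := by
              rintro rfl
              rcases hpxpar v ha with rfl | rfl
              · exact hvpy rfl
              · exact hvz rfl
            have hwpy : w ≠ py := by rintro rfl; exact hvq (hpypar v ha)
            exact ⟨⟨hwm, hwpx, hwpy⟩, Or.inl ⟨ha, hvpx, hvpy, hwpx, hwpy⟩⟩
        rw [this]; rfl
  have htrans1 : ∀ a b, A a b = true → N.arc a b = true ∨ b ∈ ({x, y} : Set ℕ) := by
    intro a b h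
    rcases (arcA a b).1 h with ⟨h, -, -, -, -⟩ | ⟨-, rfl⟩ | ⟨-, rfl⟩
    · exact Or.inl h
    · exact Or.inr (Or.inl rfl)
    · exact Or.inr (Or.inr rfl)
  have htrans2 : ∀ s ∈ ({x, y} : Set ℕ), ∀ c, ¬ A s c = true := by
    intro s hs c h
    rcases (arcA s c).1 h with ⟨h2, -, -, -, -⟩ | ⟨hh, -⟩ | ⟨hh, -⟩ <;>
      rcases hs with hs | hs
    · exact leaf_no_out hx (hs ▸ h2)
    · exact leaf_no_out hy (hs ▸ h2)
    · exact hzx (by rw [← hh, hs])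
    · exact hzy (by rw [← hh, hs])
    · exact hqx (by rw [← hh, hs])
    · exact hqy (by rw [← hh, hs])
  have hrootV : N.root ∈ V := (memV _).2 ⟨N.root_mem, Ne.symm hpxroot, Ne.symm hpyroot⟩
  refine ⟨⟨V, A, N.root, hrootV, ?_, ?_, ?_, ?_, ?_⟩, ?_, rfl, rfl, arcA, ?_, ?_⟩
  · intro a b h
    rcases (arcA a b).1 h with ⟨h, hapx, hapy, hbpx, hbpy⟩ | ⟨rfl, rfl⟩ | ⟨rfl, rfl⟩
    · exact ⟨(memV a).2 ⟨mem_of_arc_left h, hapx, hapy⟩,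
        (memV b).2 ⟨mem_of_arc_right h, hbpx, hbpy⟩⟩
    · exact ⟨hzV, hxV⟩
    · exact ⟨hqV, hyV⟩
  · exact acyclic_transfer htrans1 htrans2 N.acyclic
  · rw [Finset.card_eq_zero, Finset.eq_empty_iff_forall_notMem]
    intro a ha
    rw [Finset.mem_filter] at ha
    rcases (arcA a N.root).1 ha.2 with ⟨h, -, -, -, -⟩ | ⟨-, he⟩ | ⟨-, he⟩
    · exact ne_root_of_arc h rfl
    · exact hxroot he.symm
    · exact hyroot he.symm
  · exact (hout N.root hrootV).trans N.root_outdeg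
  · intro v hv hvr
    rw [hin v hv, hout v hv]
    exact deg_cases ((memV v).1 hv).1 hvr
  · exact ⟨px, py, z, q, hx, hy, hret, hpxx, hpypx, hpyy, hz, hzpy, hq, rfl, rfl, arcA⟩
  · exact fun v hv => ⟨hin v hv, hout v hv⟩
  · intro a b h
    rcases transGen_transfer htrans1 htrans2 h with h | h | h
    · exact Or.inl h
    · exact Or.inr (Or.inl h)
    · exact Or.inr (Or.inr h)

def Hyp (N : Network) : Prop :=
  (∀ v, ¬ IsRet N v) ∨
  (∃ r, IsRet N r ∧
    (∀ a, IsRet N a → ¬ Relation.TransGen (fun u w : ℕ => N.arc u w = true) a r) ∧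
    (∀ r', IsRet N r' → r' ≠ r →
      ∃ p c : ℕ, N.arc p r' = true ∧ N.arc p c = true ∧ c ≠ r' ∧ IsLeaf N c))

lemma leaf_of_outdeg_zero {N : Network} {v : ℕ} (hv : v ∈ N.verts) (hroot : v ≠ N.root)
    (h0 : outDeg N v = 0) : IsLeaf N v := by
  rcases deg_cases hv hroot with h | h | h <;> first
    | (exact ⟨hv, h.1, h.2⟩) | (exfalso; omega)

lemma exists_internal {N : Network} (hcard : 2 < N.verts.card) :
    ∃ v ∈ N.verts, v ≠ N.root ∧ outDeg N v ≠ 0 := by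
  classical
  obtain ⟨c, hc⟩ := exists_root_child N
  have hcmem : c ∈ N.verts := mem_of_arc_right hc
  have hcroot : c ≠ N.root := ne_root_of_arc hc
  by_cases h0 : outDeg N c = 0
  · -- find a third vertex
    have hsub : ({N.root, c} : Finset ℕ) ⊆ N.verts := by
      intro w hw; simp at hw; rcases hw with rfl | rfl
      · exact N.root_mem
      · exact hcmem
    have hlt : ({N.root, c} : Finset ℕ).card < N.verts.card := by
      have : ({N.root, c} : Finset ℕ).card ≤ 2 := Finset.card_insert_le _ _ |>.trans (by simp)
      omega
    obtain ⟨w, hwmem, hw⟩ := Finset.exists_of_ssubset ⟨hsub, fun h => absurd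
      (Finset.eq_of_subset_of_card_le h (le_of_lt hlt)).symm (by intro he; rw [he] at hlt; omega)⟩
    simp at hw
    obtain ⟨hwroot, hwc⟩ := hw
    obtain ⟨u, hu⟩ := exists_parent hwmem hwroot
    have huroot : u ≠ N.root := by
      rintro rfl; exact hwc (root_unique_child hu hc)
    exact ⟨u, mem_of_arc_left hu, huroot, by
      have := outDeg_pos hu; omega⟩
  · exact ⟨c, hcmem, hcroot, h0⟩

set_option maxHeartbeats 1000000 in
lemma step_exists (N : Network) (hcard : 2 < N.verts.card) (hH : Hyp N) :
    ∃ N', CherryStep N N' ∧ Hyp N' ∧ N'.verts.card + 2 = N.verts.card := by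
  classical
  by_cases hA : ∃ p x y, N.arc p x = true ∧ N.arc p y = true ∧ x ≠ y ∧
      IsLeaf N x ∧ IsLeaf N y
  · -- cherry reduction
    obtain ⟨p, x, y, hpx, hpy, hxy, hx, hy⟩ := hA
    have hproot : p ≠ N.root := ne_root_of_outdeg_two hpx hpy hxy
    have hp2 : 2 ≤ outDeg N p := two_le_outDeg hpx hpy hxy
    have hpout : outDeg N p = 2 := by
      rcases deg_cases (mem_of_arc_left hpx) hproot with h | h | h <;> omega
    obtain ⟨q, hqp⟩ := exists_parent (mem_of_arc_left hpx) hproot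
    obtain ⟨N', hred, hverts, hroot, harc, hdeg, htrans⟩ :=
      cherry_reduce N hx hy hxy hpx hpy hqp
    have memV : ∀ v, v ∈ N'.verts ↔ v ∈ N.verts ∧ v ≠ x ∧ v ≠ p := by
      intro v; rw [hverts]; simp [Finset.mem_erase]; tauto
    have hcard' : N'.verts.card + 2 = N.verts.card := by
      rw [hverts, Finset.card_erase_of_mem (Finset.mem_erase.2 ⟨arc_ne hpx, mem_of_arc_left hpx⟩),
        Finset.card_erase_of_mem hx.1]
      omega
    have hretiff : ∀ v, IsRet N' v → IsRet N v := by
      rintro v ⟨hv, hd⟩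
      exact ⟨((memV v).1 hv).1, by have := (hdeg v hv).1; omega⟩
    have hretiff2 : ∀ v ∈ N'.verts, IsRet N v → IsRet N' v := by
      rintro v hv ⟨-, hd⟩
      exact ⟨hv, by have := (hdeg v hv).1; omega⟩
    have hleafiff2 : ∀ v ∈ N'.verts, IsLeaf N v → IsLeaf N' v := by
      rintro v hv ⟨-, hd1, hd2⟩
      exact ⟨hv, by have := (hdeg v hv).1; omega, by have := (hdeg v hv).2; omega⟩
    refine ⟨N', ⟨x, y, Or.inl hred⟩, ?_, hcard'⟩
    rcases hH with hno | ⟨r, hr, hh, hs⟩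
    · exact Or.inl fun v hv => hno v (hretiff v hv)
    · have hrx : r ≠ x := fun h => ret_not_leaf hr (h ▸ hx)
      have hrp : r ≠ p := by
        rintro rfl; have := (ret_deg hr).2; omega
      have hrV : r ∈ N'.verts := (memV r).2 ⟨hr.1, hrx, hrp⟩
      refine Or.inr ⟨r, hretiff2 r hrV hr, ?_, ?_⟩
      · intro a ha htg
        rcases htrans a r htg with h | h
        · exact hh a (hretiff a ha) h
        · exact (ret_not_leaf (h ▸ hr) hy).elim
      · intro r'' hret'' hne
        have hr''V : r'' ∈ N'.verts := hret''.1
        obtain ⟨hm'', hr''x, hr''p⟩ := (memV r'').1 hr''V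
        obtain ⟨p', c, hpr, hpc, hcr, hc⟩ := hs r'' (hretiff r'' hret'') hne
        have hp'p : p' ≠ p := by
          rintro rfl
          rcases child_mem_pair hpout hpx hpy hxy r'' hpr with rfl | rfl
          · exact ret_not_leaf (hretiff r'' hret'') hx
          · exact ret_not_leaf (hretiff r'' hret'') hy
        have hcx : c ≠ x := by
          rintro rfl; exact hp'p (unique_parent hx.2.1 hpc hpx)
        have hcp : c ≠ p := by
          rintro rfl; have := hc.2.2; omega
        have hcV : c ∈ N'.verts := (memV c).2 ⟨hc.1, hcx, hcp⟩
        refine ⟨p', c, ?_, ?_, hcr, hleafiff2 c hcV hc⟩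
        · exact (harc p' r'').2 (Or.inl ⟨hpr, hp'p, hr''p, hr''x⟩)
        · exact (harc p' c).2 (Or.inl ⟨hpc, hp'p, hcp, hcx⟩)
  · -- no cherry available
    have hkey : ∀ v ∈ N.verts, v ≠ N.root → outDeg N v ≠ 0 →
        (∀ w, N.arc v w = true → IsLeaf N w) →
        IsRet N v ∧ ∃ x, N.arc v x = true ∧ IsLeaf N x := by
      intro v hv hvroot hvout hch
      rcases deg_cases hv hvroot with h | h | h
      · exfalso
        obtain ⟨a, ha⟩ := Finset.card_pos.1 (by omega : 0 < outDeg N v)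
        rw [Finset.mem_filter] at ha
        obtain ⟨b, hb, hba⟩ := other_child h.2 ha.2
        exact hA ⟨v, a, b, ha.2, hb, Ne.symm hba, hch a ha.2, hch b hb⟩
      · obtain ⟨a, ha⟩ := Finset.card_pos.1 (by omega : 0 < outDeg N v)
        rw [Finset.mem_filter] at ha
        exact ⟨⟨hv, h.1⟩, a, ha.2, hch a ha.2⟩
      · exact absurd h.2 hvout
    rcases hH with hno | ⟨r, hr, hh, hs⟩
    · exfalso
      obtain ⟨v0, hv0m, hv0r, hv0o⟩ := exists_internal hcard
      have hne : (N.verts.filter fun v => v ≠ N.root ∧ outDeg N v ≠ 0).Nonempty :=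
        ⟨v0, Finset.mem_filter.2 ⟨hv0m, hv0r, hv0o⟩⟩
      obtain ⟨v, hvS, hmin⟩ := Finset.exists_min_image _ (descCard N) hne
      obtain ⟨hvm, hvr, hvo⟩ := Finset.mem_filter.1 hvS
      have hch : ∀ w, N.arc v w = true → IsLeaf N w := by
        intro w hw
        have hwm := mem_of_arc_right hw
        have hwr : w ≠ N.root := ne_root_of_arc hw
        by_cases h0 : outDeg N w = 0
        · exact leaf_of_outdeg_zero hwm hwr h0
        · exfalso
          have h1 := hmin w (Finset.mem_filter.2 ⟨hwm, hwr, h0⟩)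
          have h2 := descCard_lt hw
          omega
      exact hno v (hkey v hvm hvr hvo hch).1
    · by_cases hex : ∃ r', IsRet N r' ∧ r' ≠ r
      · -- a reticulation other than r exists
        obtain ⟨r', hr', hr'r⟩ := hex
        have hr'S : r' ∈ N.verts.filter fun v => v ≠ N.root ∧ outDeg N v ≠ 0 ∧
            Relation.ReflTransGen (fun u w : ℕ => N.arc u w = true) r' v :=
          Finset.mem_filter.2 ⟨hr'.1, ret_ne_root hr',
            (by have := (ret_deg hr').2; omega), Relation.ReflTransGen.refl⟩
        obtain ⟨v, hvS, hmin⟩ := Finset.exists_min_image _ (descCard N) ⟨r', hr'S⟩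
        obtain ⟨hvm, hvr, hvo, hvreach⟩ := Finset.mem_filter.1 hvS
        have hch : ∀ w, N.arc v w = true → IsLeaf N w := by
          intro w hw
          have hwm := mem_of_arc_right hw
          have hwr : w ≠ N.root := ne_root_of_arc hw
          by_cases h0 : outDeg N w = 0
          · exact leaf_of_outdeg_zero hwm hwr h0
          · exfalso
            have h1 := hmin w (Finset.mem_filter.2
              ⟨hwm, hwr, h0, Relation.ReflTransGen.tail hvreach hw⟩)
            have h2 := descCard_lt hw
            omega
        obtain ⟨hretv, xx, hvx, hxleaf⟩ := hkey v hvm hvr hvo hch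
        have hvner : v ≠ r := by
          rintro rfl
          rcases Relation.reflTransGen_iff_eq_or_transGen.1 hvreach with h | h
          · exact hr'r h.symm
          · exact hh r' hr' h
        obtain ⟨p, c, hpv, hpc, hcv, hc⟩ := hs v hretv hvner
        obtain ⟨z, hzv, hzp⟩ := other_parent hretv.2 hpv
        have hvnec : v ≠ c := fun h => hcv h.symm
        have hproot : p ≠ N.root := ne_root_of_outdeg_two hpv hpc hvnec
        have hpout : outDeg N p = 2 := by
          have h2 := two_le_outDeg hpv hpc hvnec
          rcases deg_cases (mem_of_arc_left hpv) hproot with h | h | h <;> omega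
        obtain ⟨q, hq⟩ := exists_parent (mem_of_arc_left hpv) hproot
        obtain ⟨N', hred, hverts, hroot, harc, hdeg, htrans⟩ :=
          retcherry_reduce N hxleaf hc hretv hvx hpv hpc hzv hzp hq
        have memV : ∀ u, u ∈ N'.verts ↔ u ∈ N.verts ∧ u ≠ v ∧ u ≠ p := by
          intro u; rw [hverts]; simp [Finset.mem_erase]; tauto
        have hcard' : N'.verts.card + 2 = N.verts.card := by
          rw [hverts, Finset.card_erase_of_mem
            (Finset.mem_erase.2 ⟨arc_ne hpv, mem_of_arc_left hpv⟩),
            Finset.card_erase_of_mem hretv.1]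
          omega
        have hretiff : ∀ u, IsRet N' u → IsRet N u := by
          rintro u ⟨hu, hd⟩
          exact ⟨((memV u).1 hu).1, by have := (hdeg u hu).1; omega⟩
        have hretiff2 : ∀ u ∈ N'.verts, IsRet N u → IsRet N' u := by
          rintro u hu ⟨-, hd⟩
          exact ⟨hu, by have := (hdeg u hu).1; omega⟩
        have hleafiff2 : ∀ u ∈ N'.verts, IsLeaf N u → IsLeaf N' u := by
          rintro u hu ⟨-, hd1, hd2⟩
          exact ⟨hu, by have := (hdeg u hu).1; omega, by have := (hdeg u hu).2; omega⟩
        refine ⟨N', ⟨xx, c, Or.inr hred⟩, ?_, hcard'⟩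
        have hrv : r ≠ v := Ne.symm hvner
        have hrp : r ≠ p := by
          rintro rfl; have := (ret_deg hr).2; omega
        have hrV : r ∈ N'.verts := (memV r).2 ⟨hr.1, hrv, hrp⟩
        refine Or.inr ⟨r, hretiff2 r hrV hr, ?_, ?_⟩
        · intro a ha htg
          rcases htrans a r htg with h | h | h
          · exact hh a (hretiff a ha) h
          · exact (ret_not_leaf (h ▸ hr) hxleaf).elim
          · exact (ret_not_leaf (h ▸ hr) hc).elim
        · intro r'' hret'' hne
          have hr''V : r'' ∈ N'.verts := hret''.1
          obtain ⟨hm'', hr''v, hr''p⟩ := (memV r'').1 hr''V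
          obtain ⟨p', c', h1, h2, h3, h4⟩ := hs r'' (hretiff r'' hret'') hne
          have hvout1 : outDeg N v = 1 := (ret_deg hretv).2
          have hp'v : p' ≠ v := by
            rintro rfl
            have he : r'' = xx := unique_child hvout1 h1 hvx
            exact ret_not_leaf (hretiff r'' hret'') (he ▸ hxleaf)
          have hp'p : p' ≠ p := by
            rintro rfl
            rcases child_mem_pair hpout hpv hpc hvnec r'' h1 with rfl | rfl
            · exact hr''v rfl
            · exact ret_not_leaf (hretiff r'' hret'') hc
          have hc'v : c' ≠ v := by
            rintro rfl; exact ret_not_leaf hretv h4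
          have hc'p : c' ≠ p := by
            rintro rfl; have := h4.2.2; omega
          have hc'V : c' ∈ N'.verts := (memV c').2 ⟨h4.1, hc'v, hc'p⟩
          refine ⟨p', c', ?_, ?_, h3, hleafiff2 c' hc'V h4⟩
          · exact (harc p' r'').2 (Or.inl ⟨h1, hp'v, hp'p, hr''v, hr''p⟩)
          · exact (harc p' c').2 (Or.inl ⟨h2, hp'v, hp'p, hc'v, hc'p⟩)
      · -- r is the unique reticulation
        have huniq : ∀ a, IsRet N a → a = r := by
          intro a ha; by_contra hne; exact hex ⟨a, ha, hne⟩
        -- r has a leaf child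
        obtain ⟨v0, hv0m, hv0r, hv0o⟩ := exists_internal hcard
        have hne0 : (N.verts.filter fun v => v ≠ N.root ∧ outDeg N v ≠ 0).Nonempty :=
          ⟨v0, Finset.mem_filter.2 ⟨hv0m, hv0r, hv0o⟩⟩
        obtain ⟨v1, hv1S, hmin1⟩ := Finset.exists_min_image _ (descCard N) hne0
        obtain ⟨hv1m, hv1r, hv1o⟩ := Finset.mem_filter.1 hv1S
        have hch1 : ∀ w, N.arc v1 w = true → IsLeaf N w := by
          intro w hw
          have hwm := mem_of_arc_right hw
          have hwr : w ≠ N.root := ne_root_of_arc hw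
          by_cases h0 : outDeg N w = 0
          · exact leaf_of_outdeg_zero hwm hwr h0
          · exfalso
            have h1 := hmin1 w (Finset.mem_filter.2 ⟨hwm, hwr, h0⟩)
            have h2 := descCard_lt hw
            omega
        obtain ⟨hret1, xx, hv1x, hxleaf⟩ := hkey v1 hv1m hv1r hv1o hch1
        have hv1eq : v1 = r := huniq v1 hret1
        have hrx : N.arc r xx = true := hv1eq ▸ hv1x
        -- a non-root parent of r
        obtain ⟨u, hu⟩ := exists_parent hr.1 (ret_ne_root hr)
        obtain ⟨u2, hu2, hu2u⟩ := other_parent hr.2 hu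
        obtain ⟨u0, hu0r, hu0root⟩ : ∃ u0, N.arc u0 r = true ∧ u0 ≠ N.root := by
          by_cases h : u = N.root
          · exact ⟨u2, hu2, fun he => hu2u (he.trans h.symm)⟩
          · exact ⟨u, hu, h⟩
        have hu0S : u0 ∈ N.verts.filter fun w => w ≠ N.root ∧ outDeg N w ≠ 0 ∧ w ≠ r :=
          Finset.mem_filter.2 ⟨mem_of_arc_left hu0r, hu0root,
            (by have := outDeg_pos hu0r; omega), arc_ne hu0r⟩
        obtain ⟨m, hmS, hminm⟩ := Finset.exists_min_image _ (descCard N) ⟨u0, hu0S⟩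
        obtain ⟨hmm, hmroot, hmo, hmr⟩ := Finset.mem_filter.1 hmS
        have hchm : ∀ w, N.arc m w = true → IsLeaf N w ∨ w = r := by
          intro w hw
          have hwm := mem_of_arc_right hw
          have hwr : w ≠ N.root := ne_root_of_arc hw
          by_cases hwreq : w = r
          · exact Or.inr hwreq
          · by_cases h0 : outDeg N w = 0
            · exact Or.inl (leaf_of_outdeg_zero hwm hwr h0)
            · exfalso
              have h1 := hminm w (Finset.mem_filter.2 ⟨hwm, hwr, h0, hwreq⟩)
              have h2 := descCard_lt hw
              omega
        have hmout : outDeg N m = 2 := by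
          rcases deg_cases hmm hmroot with h | h | h
          · exact h.2
          · exact absurd (huniq m ⟨hmm, h.1⟩) hmr
          · exact absurd h.2 hmo
        obtain ⟨a, ha⟩ := Finset.card_pos.1 (by omega : 0 < outDeg N m)
        rw [Finset.mem_filter] at ha
        obtain ⟨b, hb, hba⟩ := other_child hmout ha.2
        obtain ⟨cc, hmrarc, hmc, hccr, hccleaf⟩ :
            ∃ cc, N.arc m r = true ∧ N.arc m cc = true ∧ cc ≠ r ∧ IsLeaf N cc := by
          rcases hchm a ha.2 with hal | har <;> rcases hchm b hb with hbl | hbr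
          · exact absurd ⟨m, b, a, hb, ha.2, hba, hbl, hal⟩ hA
          · exact ⟨a, hbr ▸ hb, ha.2, fun he => hba (hbr.trans he.symm), hal⟩
          · exact ⟨b, har ▸ ha.2, hb, fun he => hba (he.trans har.symm), hbl⟩
          · exact absurd (har.trans hbr.symm) (Ne.symm hba)
        obtain ⟨z, hzr, hzm⟩ := other_parent hr.2 hmrarc
        obtain ⟨q, hq⟩ := exists_parent hmm hmroot
        obtain ⟨N', hred, hverts, hroot, harc, hdeg, htrans⟩ :=
          retcherry_reduce N hxleaf hccleaf hr hrx hmrarc hmc hzr hzm hq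
        have memV : ∀ u', u' ∈ N'.verts ↔ u' ∈ N.verts ∧ u' ≠ r ∧ u' ≠ m := by
          intro u'; rw [hverts]; simp [Finset.mem_erase]; tauto
        have hcard' : N'.verts.card + 2 = N.verts.card := by
          rw [hverts, Finset.card_erase_of_mem
            (Finset.mem_erase.2 ⟨hmr, hmm⟩),
            Finset.card_erase_of_mem hr.1]
          omega
        have hretiff : ∀ u', IsRet N' u' → IsRet N u' := by
          rintro u' ⟨hu', hd⟩
          exact ⟨((memV u').1 hu').1, by have := (hdeg u' hu').1; omega⟩
        refine ⟨N', ⟨xx, cc, Or.inr hred⟩, Or.inl ?_, hcard'⟩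
        intro a' ha'
        have ha'' := hretiff a' ha'
        have := huniq a' ha''
        subst this
        exact ((memV a').1 ha'.1).2.1 rfl
    

lemma card_ge_two (N : Network) : 2 ≤ N.verts.card := by
  obtain ⟨c, hc⟩ := exists_root_child N
  have hsub : ({N.root, c} : Finset ℕ) ⊆ N.verts := by
    intro w hw; simp at hw
    rcases hw with rfl | rfl
    · exact N.root_mem
    · exact mem_of_arc_right hc
  calc 2 = ({N.root, c} : Finset ℕ).card := by
        rw [Finset.card_insert_of_notMem (by simp [Ne.symm (ne_root_of_arc hc)]),
          Finset.card_singleton]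
    _ ≤ _ := Finset.card_le_card hsub

lemma single_of_card_two (N : Network) (h : N.verts.card = 2) : IsSingleLeaf N := by
  obtain ⟨c, hc⟩ := exists_root_child N
  have hcr : c ≠ N.root := ne_root_of_arc hc
  have hsub : ({N.root, c} : Finset ℕ) ⊆ N.verts := by
    intro w hw; simp at hw
    rcases hw with rfl | rfl
    · exact N.root_mem
    · exact mem_of_arc_right hc
  have hcard2 : ({N.root, c} : Finset ℕ).card = 2 := by
    rw [Finset.card_insert_of_notMem (by simp [Ne.symm hcr]), Finset.card_singleton]
  exact ⟨c, hcr, (Finset.eq_of_subset_of_card_le hsub (by omega)).symm⟩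

lemma hyp_orchard : ∀ n (N : Network), N.verts.card = n → Hyp N → IsOrchard N := by
  intro n
  induction n using Nat.strong_induction_on with
  | _ n ih =>
    intro N hcard hH
    by_cases h2 : 2 < N.verts.card
    · obtain ⟨N', hstep, hH', hc⟩ := step_exists N h2 hH
      obtain ⟨N'', hrt, hsl⟩ := ih N'.verts.card (by omega) N' rfl hH'
      exact ⟨N'', Relation.ReflTransGen.head hstep hrt, hsl⟩
    · have h2' := card_ge_two N
      exact ⟨N, Relation.ReflTransGen.refl, single_of_card_two N (by omega)⟩


/-- If `N` has a highest reticulation `r` (no reticulation is an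
ancestor of it) such that every other reticulation has a leaf sibling, then `N`
is orchard. -/
theorem highestRet_leafSiblings_orchard (N : Network) (r : ℕ)
    (hr : IsRet N r)
    (hhigh : ∀ a : ℕ, IsRet N a →
      ¬ Relation.TransGen (fun x y : ℕ => N.arc x y = true) a r)
    (hsib : ∀ r' : ℕ, IsRet N r' → r' ≠ r →
      ∃ p c : ℕ, N.arc p r' = true ∧ N.arc p c = true ∧ c ≠ r' ∧ IsLeaf N c) :
    IsOrchard N :=
  hyp_orchard N.verts.card N rfl (Or.inr ⟨r, hr, hhigh, hsib⟩)

end PhyloNet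
end
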